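/- arXiv:2403.19097 — 5 statements merged into one kernel-verified Lean document; each statement's English description precedes it below -/
import Mathlib

section
/- Let X, X' be finite sets with probability measures μ, μ', and let k : X × X → ℝ, k' : X' × X' → ℝ be symmetric bounded functions. The infimum over couplings π ∈ Π(μ, μ') of the Gromov–Wasserstein p-distortion (∑_{x,y∈X, x',y'∈X'} |k(x,y) − k'(x',y')|^p π(x,x') π(y,y'))^{1/p} defines, over the class of such finite gauged measure spaces, a function that is symmetric and satisfies the triangle inequality (i.e., is a pseudometric). -/
open Finset

/-- A finite gauged measure space: a finite set with a symmetric bounded gauge function and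
a fully supported probability measure. -/
structure FinGauged where
  X : Type
  [finX : Fintype X]
  k : X → X → ℝ
  μ : X → ℝ

attribute [instance] FinGauged.finX

/-- Validity: `k` symmetric and `μ` a fully supported probability measure. -/
def FinGauged.Valid (M : FinGauged) : Prop :=
  (∀ x y, M.k x y = M.k y x) ∧ (∀ x, 0 < M.μ x) ∧ (∑ x, M.μ x = 1)


lemma gw_double_marg {T Q : Type} [Fintype T] [Fintype Q] (γ : T → ℝ) (π : Q → ℝ) (φ : T → Q)
    (h : ∀ f : Q → ℝ, ∑ t, γ t * f (φ t) = ∑ q, π q * f q) (c : Q → Q → ℝ) :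
    ∑ s, ∑ t, c (φ s) (φ t) * γ s * γ t = ∑ q, ∑ q', c q q' * π q * π q' := by
  have step1 : ∀ s : T, ∑ t, c (φ s) (φ t) * γ s * γ t = γ s * ∑ t, γ t * c (φ s) (φ t) := by
    intro s
    rw [Finset.mul_sum]
    exact Finset.sum_congr rfl fun t _ => by ring
  calc ∑ s, ∑ t, c (φ s) (φ t) * γ s * γ t
      = ∑ s, γ s * (fun q => ∑ q', π q' * c q q') (φ s) := by
        refine Finset.sum_congr rfl fun s _ => ?_
        rw [step1 s, h (fun q' => c (φ s) q')]
    _ = ∑ q, π q * ∑ q', π q' * c q q' := by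
        have h2 := h (fun q => ∑ q', π q' * c q q')
        simpa using h2
    _ = ∑ q, ∑ q', c q q' * π q * π q' := by
        refine Finset.sum_congr rfl fun q _ => ?_
        rw [Finset.mul_sum]
        exact Finset.sum_congr rfl fun q' _ => by ring

lemma gw_mink {T : Type} [Fintype T] (p : ℝ) (hp : 1 ≤ p) (w : T → ℝ) (hw : ∀ t, 0 ≤ w t)
    (a b c : T → T → ℝ) (hab : ∀ s t, |a s t| ≤ |b s t| + |c s t|) :
    (∑ s, ∑ t, |a s t| ^ p * w s * w t) ^ (1/p) ≤
      (∑ s, ∑ t, |b s t| ^ p * w s * w t) ^ (1/p) +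
      (∑ s, ∑ t, |c s t| ^ p * w s * w t) ^ (1/p) := by
  have hp0 : 0 < p := lt_of_lt_of_le one_pos hp
  set F : T × T → ℝ := fun q => |b q.1 q.2| * (w q.1 * w q.2) ^ (1/p) with hF
  set G : T × T → ℝ := fun q => |c q.1 q.2| * (w q.1 * w q.2) ^ (1/p) with hG
  have hww : ∀ q : T × T, (0:ℝ) ≤ w q.1 * w q.2 := fun q => mul_nonneg (hw _) (hw _)
  have hpow : ∀ (x : ℝ), 0 ≤ x → ∀ q : T × T,
      (x * (w q.1 * w q.2) ^ (1/p)) ^ p = x ^ p * w q.1 * w q.2 := by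
    intro x hx q
    rw [Real.mul_rpow hx (Real.rpow_nonneg (hww q) _), ← Real.rpow_mul (hww q),
      one_div_mul_cancel hp0.ne', Real.rpow_one, mul_assoc]
  have hFnn : ∀ q, 0 ≤ F q := fun q =>
    mul_nonneg (abs_nonneg _) (Real.rpow_nonneg (hww q) _)
  have hGnn : ∀ q, 0 ≤ G q := fun q =>
    mul_nonneg (abs_nonneg _) (Real.rpow_nonneg (hww q) _)
  have hFp : ∀ q : T × T, |F q| ^ p = |b q.1 q.2| ^ p * w q.1 * w q.2 := fun q => by
    rw [abs_of_nonneg (hFnn q)]; exact hpow _ (abs_nonneg _) q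
  have hGp : ∀ q : T × T, |G q| ^ p = |c q.1 q.2| ^ p * w q.1 * w q.2 := fun q => by
    rw [abs_of_nonneg (hGnn q)]; exact hpow _ (abs_nonneg _) q
  have hsumb : ∑ q : T × T, |F q| ^ p = ∑ s, ∑ t, |b s t| ^ p * w s * w t := by
    rw [Fintype.sum_prod_type]
    exact Finset.sum_congr rfl fun s _ => Finset.sum_congr rfl fun t _ => hFp (s, t)
  have hsumc : ∑ q : T × T, |G q| ^ p = ∑ s, ∑ t, |c s t| ^ p * w s * w t := by
    rw [Fintype.sum_prod_type]
    exact Finset.sum_congr rfl fun s _ => Finset.sum_congr rfl fun t _ => hGp (s, t)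
  have hFG : ∀ q : T × T, |a q.1 q.2| ^ p * w q.1 * w q.2 ≤ |F q + G q| ^ p := by
    intro q
    have h1 : F q + G q = (|b q.1 q.2| + |c q.1 q.2|) * (w q.1 * w q.2) ^ (1/p) := by
      simp only [hF, hG]; ring
    rw [h1, abs_of_nonneg (mul_nonneg (by positivity) (Real.rpow_nonneg (hww q) _)),
      hpow _ (by positivity) q]
    have := Real.rpow_le_rpow (abs_nonneg (a q.1 q.2)) (hab q.1 q.2) hp0.le
    exact mul_le_mul_of_nonneg_right (mul_le_mul_of_nonneg_right this (hw _)) (hw _)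
  have hsuma : ∑ s, ∑ t, |a s t| ^ p * w s * w t ≤ ∑ q : T × T, |F q + G q| ^ p := by
    rw [Fintype.sum_prod_type]
    exact Finset.sum_le_sum fun s _ => Finset.sum_le_sum fun t _ => hFG (s, t)
  calc (∑ s, ∑ t, |a s t| ^ p * w s * w t) ^ (1/p)
      ≤ (∑ q : T × T, |F q + G q| ^ p) ^ (1/p) := by
        apply Real.rpow_le_rpow _ hsuma (one_div_pos.mpr hp0).le
        exact Finset.sum_nonneg fun s _ => Finset.sum_nonneg fun t _ =>
          mul_nonneg (mul_nonneg (Real.rpow_nonneg (abs_nonneg _) _) (hw s)) (hw t)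
    _ ≤ (∑ q : T × T, |F q| ^ p) ^ (1/p) + (∑ q : T × T, |G q| ^ p) ^ (1/p) :=
        Real.Lp_add_le univ F G hp
    _ = _ := by rw [hsumb, hsumc]

/-- Couplings of finitely supported measures. -/
def IsCoupling {A B : Type*} [Fintype A] [Fintype B]
    (μ : A → ℝ) (μ' : B → ℝ) (π : A → B → ℝ) : Prop :=
  (∀ a b, 0 ≤ π a b) ∧ (∀ a, ∑ b, π a b = μ a) ∧ (∀ b, ∑ a, π a b = μ' b)

section marg
variable {A B C : Type} [Fintype A] [Fintype B] [Fintype C]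
  (μ₂ : B → ℝ) (π₁₂ : A → B → ℝ) (π₂₃ : B → C → ℝ)

lemma gw_M12 (hμ₂ : ∀ b, μ₂ b ≠ 0) (h23r : ∀ b, ∑ c, π₂₃ b c = μ₂ b) (f : A × B → ℝ) :
    ∑ t : A × B × C, (π₁₂ t.1 t.2.1 * π₂₃ t.2.1 t.2.2 / μ₂ t.2.1) * f (t.1, t.2.1)
      = ∑ q : A × B, π₁₂ q.1 q.2 * f q := by
  simp only [Fintype.sum_prod_type]
  refine Finset.sum_congr rfl fun a _ => Finset.sum_congr rfl fun b _ => ?_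
  have : ∀ c : C, π₁₂ a b * π₂₃ b c / μ₂ b * f (a, b)
      = π₂₃ b c * (π₁₂ a b * f (a, b) / μ₂ b) := fun c => by ring
  rw [Finset.sum_congr rfl fun c _ => this c, ← Finset.sum_mul, h23r b, mul_comm,
    div_mul_cancel₀ _ (hμ₂ b)]

lemma gw_M23 (hμ₂ : ∀ b, μ₂ b ≠ 0) (h12c : ∀ b, ∑ a, π₁₂ a b = μ₂ b) (f : B × C → ℝ) :
    ∑ t : A × B × C, (π₁₂ t.1 t.2.1 * π₂₃ t.2.1 t.2.2 / μ₂ t.2.1) * f (t.2.1, t.2.2)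
      = ∑ q : B × C, π₂₃ q.1 q.2 * f q := by
  simp only [Fintype.sum_prod_type]
  rw [Finset.sum_comm]
  refine Finset.sum_congr rfl fun b _ => ?_
  rw [Finset.sum_comm]
  refine Finset.sum_congr rfl fun c _ => ?_
  have : ∀ a : A, π₁₂ a b * π₂₃ b c / μ₂ b * f (b, c)
      = π₁₂ a b * (π₂₃ b c * f (b, c) / μ₂ b) := fun a => by ring
  rw [Finset.sum_congr rfl fun a _ => this a, ← Finset.sum_mul, h12c b, mul_comm,
    div_mul_cancel₀ _ (hμ₂ b)]

lemma gw_M13 (f : A × C → ℝ) :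
    ∑ t : A × B × C, (π₁₂ t.1 t.2.1 * π₂₃ t.2.1 t.2.2 / μ₂ t.2.1) * f (t.1, t.2.2)
      = ∑ q : A × C, (∑ b, π₁₂ q.1 b * π₂₃ b q.2 / μ₂ b) * f q := by
  simp only [Fintype.sum_prod_type]
  refine Finset.sum_congr rfl fun a _ => ?_
  rw [Finset.sum_comm]
  refine Finset.sum_congr rfl fun c _ => ?_
  rw [Finset.sum_mul]

end marg

lemma gw_quad {A B : Type} [Fintype A] [Fintype B] (c : (A × B) → (A × B) → ℝ)
    (π : A → B → ℝ) :
    ∑ q : A × B, ∑ q' : A × B, c q q' * π q.1 q.2 * π q'.1 q'.2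
      = ∑ x, ∑ x', ∑ y, ∑ y', c (x, x') (y, y') * π x x' * π y y' := by
  simp only [Fintype.sum_prod_type]

lemma gw_glue {A B C : Type} [Fintype A] [Fintype B] [Fintype C]
    (p : ℝ) (hp : 1 ≤ p)
    (k₁ : A → A → ℝ) (k₂ : B → B → ℝ) (k₃ : C → C → ℝ)
    (μ₁ : A → ℝ) (μ₂ : B → ℝ) (μ₃ : C → ℝ) (hμ₂ : ∀ b, 0 < μ₂ b)
    (π₁₂ : A → B → ℝ) (π₂₃ : B → C → ℝ)
    (h12 : IsCoupling μ₁ μ₂ π₁₂) (h23 : IsCoupling μ₂ μ₃ π₂₃) :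
    ∃ π₁₃ : A → C → ℝ, IsCoupling μ₁ μ₃ π₁₃ ∧
      (∑ x, ∑ x', ∑ y, ∑ y', |k₁ x y - k₃ x' y'| ^ p * π₁₃ x x' * π₁₃ y y') ^ (1/p) ≤
      (∑ x, ∑ x', ∑ y, ∑ y', |k₁ x y - k₂ x' y'| ^ p * π₁₂ x x' * π₁₂ y y') ^ (1/p) +
      (∑ x, ∑ x', ∑ y, ∑ y', |k₂ x y - k₃ x' y'| ^ p * π₂₃ x x' * π₂₃ y y') ^ (1/p) := by
  obtain ⟨h12nn, h12r, h12c⟩ := h12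
  obtain ⟨h23nn, h23r, h23c⟩ := h23
  have hμ₂' : ∀ b, μ₂ b ≠ 0 := fun b => (hμ₂ b).ne'
  set γ : A × B × C → ℝ := fun t => π₁₂ t.1 t.2.1 * π₂₃ t.2.1 t.2.2 / μ₂ t.2.1 with hγ
  have hγnn : ∀ t, 0 ≤ γ t := fun t =>
    div_nonneg (mul_nonneg (h12nn _ _) (h23nn _ _)) (hμ₂ _).le
  set π₁₃ : A → C → ℝ := fun a c => ∑ b, π₁₂ a b * π₂₃ b c / μ₂ b with hπ₁₃
  refine ⟨π₁₃, ⟨?_, ?_, ?_⟩, ?_⟩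
  · intro a c
    exact Finset.sum_nonneg fun b _ =>
      div_nonneg (mul_nonneg (h12nn _ _) (h23nn _ _)) (hμ₂ _).le
  · intro a
    rw [Finset.sum_comm]
    calc ∑ b, ∑ c, π₁₂ a b * π₂₃ b c / μ₂ b
        = ∑ b, π₁₂ a b := by
          refine Finset.sum_congr rfl fun b _ => ?_
          have : ∀ c : C, π₁₂ a b * π₂₃ b c / μ₂ b = π₂₃ b c * (π₁₂ a b / μ₂ b) :=
            fun c => by ring
          rw [Finset.sum_congr rfl fun c _ => this c, ← Finset.sum_mul, h23r b, mul_comm,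
            div_mul_cancel₀ _ (hμ₂' b)]
      _ = μ₁ a := h12r a
  · intro c
    rw [Finset.sum_comm]
    calc ∑ b, ∑ a, π₁₂ a b * π₂₃ b c / μ₂ b
        = ∑ b, π₂₃ b c := by
          refine Finset.sum_congr rfl fun b _ => ?_
          have : ∀ a : A, π₁₂ a b * π₂₃ b c / μ₂ b = π₁₂ a b * (π₂₃ b c / μ₂ b) :=
            fun a => by ring
          rw [Finset.sum_congr rfl fun a _ => this a, ← Finset.sum_mul, h12c b, mul_comm,
            div_mul_cancel₀ _ (hμ₂' b)]
      _ = μ₃ c := h23c c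
  · -- the distortion inequality
    have E12 : ∑ s : A × B × C, ∑ t : A × B × C,
        |k₁ s.1 t.1 - k₂ s.2.1 t.2.1| ^ p * γ s * γ t
        = ∑ x, ∑ x', ∑ y, ∑ y', |k₁ x y - k₂ x' y'| ^ p * π₁₂ x x' * π₁₂ y y' := by
      have := gw_double_marg γ (fun q : A × B => π₁₂ q.1 q.2) (fun t => (t.1, t.2.1))
        (fun f => gw_M12 μ₂ π₁₂ π₂₃ hμ₂' h23r f)
        (fun q q' => |k₁ q.1 q'.1 - k₂ q.2 q'.2| ^ p)
      exact this.trans (gw_quad (fun q q' => |k₁ q.1 q'.1 - k₂ q.2 q'.2| ^ p) π₁₂)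
    have E23 : ∑ s : A × B × C, ∑ t : A × B × C,
        |k₂ s.2.1 t.2.1 - k₃ s.2.2 t.2.2| ^ p * γ s * γ t
        = ∑ x, ∑ x', ∑ y, ∑ y', |k₂ x y - k₃ x' y'| ^ p * π₂₃ x x' * π₂₃ y y' := by
      have := gw_double_marg γ (fun q : B × C => π₂₃ q.1 q.2) (fun t => (t.2.1, t.2.2))
        (fun f => gw_M23 μ₂ π₁₂ π₂₃ hμ₂' h12c f)
        (fun q q' => |k₂ q.1 q'.1 - k₃ q.2 q'.2| ^ p)
      exact this.trans (gw_quad (fun q q' => |k₂ q.1 q'.1 - k₃ q.2 q'.2| ^ p) π₂₃)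
    have E13 : ∑ s : A × B × C, ∑ t : A × B × C,
        |k₁ s.1 t.1 - k₃ s.2.2 t.2.2| ^ p * γ s * γ t
        = ∑ x, ∑ x', ∑ y, ∑ y', |k₁ x y - k₃ x' y'| ^ p * π₁₃ x x' * π₁₃ y y' := by
      have := gw_double_marg γ (fun q : A × C => π₁₃ q.1 q.2) (fun t => (t.1, t.2.2))
        (fun f => gw_M13 μ₂ π₁₂ π₂₃ f)
        (fun q q' => |k₁ q.1 q'.1 - k₃ q.2 q'.2| ^ p)
      exact this.trans (gw_quad (fun q q' => |k₁ q.1 q'.1 - k₃ q.2 q'.2| ^ p) π₁₃)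
    have hmink := gw_mink p hp γ hγnn
      (fun s t => k₁ s.1 t.1 - k₃ s.2.2 t.2.2)
      (fun s t => k₁ s.1 t.1 - k₂ s.2.1 t.2.1)
      (fun s t => k₂ s.2.1 t.2.1 - k₃ s.2.2 t.2.2)
      (fun s t => by
        have := abs_sub_le (k₁ s.1 t.1) (k₂ s.2.1 t.2.1) (k₃ s.2.2 t.2.2)
        simpa using this)
    rw [← E12, ← E23, ← E13]
    exact hmink


lemma gw_cost_symm {A B : Type} [Fintype A] [Fintype B] (p : ℝ)
    (k : A → A → ℝ) (k' : B → B → ℝ) (π : A → B → ℝ) :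
    ∑ x', ∑ x, ∑ y', ∑ y, |k' x' y' - k x y| ^ p * π x x' * π y y'
      = ∑ x, ∑ x', ∑ y, ∑ y', |k x y - k' x' y'| ^ p * π x x' * π y y' := by
  rw [Finset.sum_comm]
  refine Finset.sum_congr rfl fun x _ => Finset.sum_congr rfl fun x' _ => ?_
  rw [Finset.sum_comm]
  refine Finset.sum_congr rfl fun y _ => Finset.sum_congr rfl fun y' _ => ?_
  rw [abs_sub_comm]

/-- The Gromov–Wasserstein `p`-distance between finite gauged measure spaces. -/
noncomputable def dGW (p : ℝ) (M M' : FinGauged) : ℝ :=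
  sInf {r | ∃ π : M.X → M'.X → ℝ, IsCoupling M.μ M'.μ π ∧
    r = (∑ x, ∑ x', ∑ y, ∑ y',
        |M.k x y - M'.k x' y'| ^ p * π x x' * π y y') ^ (1 / p)}

/-- The set of achievable distortions. -/
def gwSet (p : ℝ) (M M' : FinGauged) : Set ℝ :=
  {r | ∃ π : M.X → M'.X → ℝ, IsCoupling M.μ M'.μ π ∧
    r = (∑ x, ∑ x', ∑ y, ∑ y',
        |M.k x y - M'.k x' y'| ^ p * π x x' * π y y') ^ (1 / p)}

lemma dGW_eq_sInf (p : ℝ) (M M' : FinGauged) : dGW p M M' = sInf (gwSet p M M') := rfl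

lemma gw_bddBelow (p : ℝ) (M M' : FinGauged) : BddBelow (gwSet p M M') := by
  refine ⟨0, ?_⟩
  rintro r ⟨π, hπ, rfl⟩
  refine Real.rpow_nonneg ?_ _
  refine Finset.sum_nonneg fun x _ => Finset.sum_nonneg fun x' _ =>
    Finset.sum_nonneg fun y _ => Finset.sum_nonneg fun y' _ => ?_
  exact mul_nonneg (mul_nonneg (Real.rpow_nonneg (abs_nonneg _) _) (hπ.1 _ _)) (hπ.1 _ _)

lemma gw_nonempty (p : ℝ) (M M' : FinGauged) (hM : M.Valid) (hM' : M'.Valid) :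
    (gwSet p M M').Nonempty := by
  refine ⟨_, fun a b => M.μ a * M'.μ b, ⟨?_, ?_, ?_⟩, rfl⟩
  · exact fun a b => mul_nonneg (hM.2.1 a).le (hM'.2.1 b).le
  · intro a; rw [← Finset.mul_sum, hM'.2.2, mul_one]
  · intro b; rw [← Finset.sum_mul, hM.2.2, one_mul]

/-- The Gromov–Wasserstein `p`-distance is symmetric and satisfies the triangle inequality
on finite gauged measure spaces, i.e. it is a pseudometric. -/
theorem stmt_10 (p : ℝ) (hp : 1 ≤ p) :
    (∀ M M' : FinGauged, M.Valid → M'.Valid → dGW p M M' = dGW p M' M) ∧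
    (∀ M₁ M₂ M₃ : FinGauged, M₁.Valid → M₂.Valid → M₃.Valid →
      dGW p M₁ M₃ ≤ dGW p M₁ M₂ + dGW p M₂ M₃) := by
  constructor
  · intro M M' _ _
    rw [dGW_eq_sInf, dGW_eq_sInf]
    congr 1
    ext r
    constructor
    · rintro ⟨π, ⟨hnn, hr, hc⟩, rfl⟩
      exact ⟨fun b a => π a b, ⟨fun b a => hnn a b, hc, hr⟩,
        congrArg (fun z => z ^ (1 / p)) (gw_cost_symm p M.k M'.k π).symm⟩
    · rintro ⟨π, ⟨hnn, hr, hc⟩, rfl⟩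
      exact ⟨fun b a => π a b, ⟨fun b a => hnn a b, hc, hr⟩,
        congrArg (fun z => z ^ (1 / p)) (gw_cost_symm p M'.k M.k π).symm⟩
  · intro M₁ M₂ M₃ h₁ h₂ h₃
    have h1 := gw_nonempty p M₁ M₂ h₁ h₂
    have h2 := gw_nonempty p M₂ M₃ h₂ h₃
    have bdd13 := gw_bddBelow p M₁ M₃
    rw [dGW_eq_sInf, dGW_eq_sInf, dGW_eq_sInf]
    have key : ∀ r₁ ∈ gwSet p M₁ M₂, ∀ r₂ ∈ gwSet p M₂ M₃,
        sInf (gwSet p M₁ M₃) ≤ r₁ + r₂ := by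
      rintro r₁ ⟨π₁₂, h12, rfl⟩ r₂ ⟨π₂₃, h23, rfl⟩
      obtain ⟨π₁₃, h13, hineq⟩ := gw_glue p hp M₁.k M₂.k M₃.k M₁.μ M₂.μ M₃.μ
        h₂.2.1 π₁₂ π₂₃ h12 h23
      exact le_trans (csInf_le bdd13 ⟨π₁₃, h13, rfl⟩) hineq
    have A : ∀ r₂ ∈ gwSet p M₂ M₃,
        sInf (gwSet p M₁ M₃) - r₂ ≤ sInf (gwSet p M₁ M₂) :=
      fun r₂ hr₂ => le_csInf h1 fun r₁ hr₁ => by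
        have := key r₁ hr₁ r₂ hr₂; linarith
    have B : sInf (gwSet p M₁ M₃) - sInf (gwSet p M₁ M₂) ≤ sInf (gwSet p M₂ M₃) :=
      le_csInf h2 fun r₂ hr₂ => by have := A r₂ hr₂; linarith
    linarith
end

section
/- In the finite setting, d_{TpOT,p} satisfies the triangle inequality: for three finite measure topological networks P₁, P₂, P₃, d_{TpOT,p}(P₁, P₃) ≤ d_{TpOT,p}(P₁, P₂) + d_{TpOT,p}(P₂, P₃). -/
open Finset

/-- A finite measure topological network `P = ((X, k, μ), (Y, ι, ν), ω)`. -/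
structure FinTopNet where
  X : Type
  Y : Type
  [finX : Fintype X]
  [finY : Fintype Y]
  k : X → X → ℝ
  μ : X → ℝ
  ι : Y → ℝ × ℝ
  ν : Y → ℝ
  ω : X → Y → ℝ

attribute [instance] FinTopNet.finX FinTopNet.finY

/-- ℓᵖ distance on ℝ², raised to the power `p`. -/
noncomputable def lpp (p : ℝ) (a b : ℝ × ℝ) : ℝ := |a.1 - b.1| ^ p + |a.2 - b.2| ^ p

/-- Projection of a point of ℝ² onto the diagonal. -/
noncomputable def diagProj (a : ℝ × ℝ) : ℝ × ℝ := ((a.1 + a.2) / 2, (a.1 + a.2) / 2)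

/-- Cost (to the power `p`) between augmented persistence-diagram points: the virtual
point `∂` (encoded by `none`) acts as the diagonal projection of the other point. -/
noncomputable def pdCost {Y Y' : Type*} (p : ℝ) (ι : Y → ℝ × ℝ) (ι' : Y' → ℝ × ℝ) :
    Option Y → Option Y' → ℝ
  | some y, some y' => lpp p (ι y) (ι' y')
  | some y, none => lpp p (ι y) (diagProj (ι y))
  | none, some y' => lpp p (diagProj (ι' y')) (ι' y')
  | none, none => 0

/-- Extension of `ω` to the augmented set `Ȳ = Y ∪ {∂}` by `ω(·, ∂) = 0`. -/
def ωbar {X Y : Type*} (ω : X → Y → ℝ) : X → Option Y → ℝ := fun x oy =>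
  match oy with
  | some y => ω x y
  | none => 0

/-- Admissible couplings between measures `ν, ν'` on the augmented sets: marginals are
`ν, ν'` on `Y, Y'` and no mass is put on `(∂, ∂)`. -/
def IsAdmissible {Y Y' : Type*} [Fintype Y] [Fintype Y'] (ν : Y → ℝ) (ν' : Y' → ℝ)
    (π : Option Y → Option Y' → ℝ) : Prop :=
  (∀ a b, 0 ≤ π a b) ∧ (∀ y : Y, ∑ y' : Option Y', π (some y) y' = ν y) ∧
    (∀ y' : Y', ∑ y : Option Y, π y (some y') = ν' y') ∧ π none none = 0

/-- The TpOT objective (before the `1/p` power): persistence-diagram transport term,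
Gromov–Wasserstein term, and co-optimal transport term. -/
noncomputable def tpotObj (p : ℝ) (P P' : FinTopNet) (πv : P.X → P'.X → ℝ)
    (πe : Option P.Y → Option P'.Y → ℝ) : ℝ :=
  (∑ y : Option P.Y, ∑ y' : Option P'.Y, pdCost p P.ι P'.ι y y' * πe y y') +
  (∑ x₁, ∑ x₁', ∑ x₂, ∑ x₂',
      |P.k x₁ x₂ - P'.k x₁' x₂'| ^ p * πv x₁ x₁' * πv x₂ x₂') +
  (∑ x, ∑ x', ∑ y : Option P.Y, ∑ y' : Option P'.Y,
      |ωbar P.ω x y - ωbar P'.ω x' y'| ^ p * πv x x' * πe y y')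

/-- The Topological Optimal Transport cost `d_{TpOT,p}`. -/
noncomputable def dTpOT (p : ℝ) (P P' : FinTopNet) : ℝ :=
  sInf {r | ∃ πv : P.X → P'.X → ℝ, ∃ πe : Option P.Y → Option P'.Y → ℝ,
    IsCoupling P.μ P'.μ πv ∧ IsAdmissible P.ν P'.ν πe ∧
    r = (tpotObj p P P' πv πe) ^ (1 / p)}

/-- Validity: `k` symmetric, `μ` a fully supported probability measure, `ν` fully
supported. -/
def FinTopNet.Valid (P : FinTopNet) : Prop :=
  (∀ x y, P.k x y = P.k y x) ∧ (∀ x, 0 < P.μ x) ∧ (∑ x, P.μ x = 1) ∧ (∀ y, 0 < P.ν y)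


open scoped ENNReal


lemma weighted_minkowski {ι : Type*} [Fintype ι] {p : ℝ} (hp : 1 ≤ p)
    (w f g : ι → ℝ) (hw : ∀ i, 0 ≤ w i) :
    (∑ i, w i * |f i + g i| ^ p) ^ (1/p) ≤
      (∑ i, w i * |f i| ^ p) ^ (1/p) + (∑ i, w i * |g i| ^ p) ^ (1/p) := by
  have hp0 : (0:ℝ) < p := lt_of_lt_of_le one_pos hp
  set q : ℝ≥0∞ := ENNReal.ofReal p with hq
  haveI : Fact (1 ≤ q) := ⟨by simpa [hq] using ENNReal.one_le_ofReal.mpr hp⟩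
  have hqt : q.toReal = p := ENNReal.toReal_ofReal hp0.le
  have key : ∀ (h : ι → ℝ) (i : ι), ‖w i ^ (1/p) * h i‖ ^ p = w i * |h i| ^ p := by
    intro h i
    rw [Real.norm_eq_abs, abs_mul, abs_of_nonneg (Real.rpow_nonneg (hw i) _),
      Real.mul_rpow (Real.rpow_nonneg (hw i) _) (abs_nonneg _),
      ← Real.rpow_mul (hw i), one_div_mul_cancel hp0.ne', Real.rpow_one]
  let F : PiLp q (fun _ : ι => ℝ) := WithLp.toLp q (fun i => w i ^ (1/p) * f i)
  let G : PiLp q (fun _ : ι => ℝ) := WithLp.toLp q (fun i => w i ^ (1/p) * g i)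
  have hFG : ∀ i, (F + G) i = w i ^ (1/p) * (f i + g i) := by
    intro i; show F i + G i = _; simp [F, G]; ring
  have hnF : ‖F‖ = (∑ i, w i * |f i| ^ p) ^ (1/p) := by
    rw [PiLp.norm_eq_sum (by rw [hqt]; exact hp0)]
    rw [hqt]
    congr 1
    exact Finset.sum_congr rfl fun i _ => key f i
  have hnG : ‖G‖ = (∑ i, w i * |g i| ^ p) ^ (1/p) := by
    rw [PiLp.norm_eq_sum (by rw [hqt]; exact hp0), hqt]
    congr 1
    exact Finset.sum_congr rfl fun i _ => key g i
  have hnFG : ‖F + G‖ = (∑ i, w i * |f i + g i| ^ p) ^ (1/p) := by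
    rw [PiLp.norm_eq_sum (by rw [hqt]; exact hp0), hqt]
    congr 1
    refine Finset.sum_congr rfl fun i _ => ?_
    rw [hFG i]; exact key (fun j => f j + g j) i
  calc (∑ i, w i * |f i + g i| ^ p) ^ (1/p) = ‖F + G‖ := hnFG.symm
    _ ≤ ‖F‖ + ‖G‖ := norm_add_le F G
    _ = _ := by rw [hnF, hnG]


lemma lpp_nonneg (p : ℝ) (a b : ℝ × ℝ) : 0 ≤ lpp p a b :=
  add_nonneg (Real.rpow_nonneg (abs_nonneg _) _) (Real.rpow_nonneg (abs_nonneg _) _)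

lemma lpp_self (p : ℝ) (hp : p ≠ 0) (a : ℝ × ℝ) : lpp p a a = 0 := by
  simp [lpp, Real.zero_rpow hp]

lemma lpp_comm (p : ℝ) (a b : ℝ × ℝ) : lpp p a b = lpp p b a := by
  simp [lpp, abs_sub_comm]

lemma lpp_diag_min {p : ℝ} (hp : 1 ≤ p) (a : ℝ × ℝ) (t : ℝ) :
    lpp p a (diagProj a) ≤ lpp p a (t, t) := by
  have hp0 : (0:ℝ) < p := lt_of_lt_of_le one_pos hp
  have h1 : |a.1 - (a.1 + a.2)/2| = |a.1 - a.2|/2 := by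
    rw [show a.1 - (a.1 + a.2)/2 = (a.1 - a.2)/2 by ring, abs_div]; norm_num
  have h2 : |a.2 - (a.1 + a.2)/2| = |a.1 - a.2|/2 := by
    rw [show a.2 - (a.1 + a.2)/2 = -((a.1 - a.2)/2) by ring, abs_neg, abs_div]; norm_num
  set z1 := |a.1 - t| with hz1
  set z2 := |a.2 - t| with hz2
  have hz1n : 0 ≤ z1 := abs_nonneg _
  have hz2n : 0 ≤ z2 := abs_nonneg _
  have hmid : |a.1 - a.2|/2 ≤ (z1 + z2)/2 := by
    have : |a.1 - a.2| ≤ z1 + z2 := by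
      calc |a.1 - a.2| = |(a.1 - t) + (t - a.2)| := by ring_nf
        _ ≤ |a.1 - t| + |t - a.2| := abs_add_le _ _
        _ = z1 + z2 := by rw [hz1, hz2, abs_sub_comm t a.2]
    linarith
  have hmean : ((1:ℝ)/2 * z1 + 1/2 * z2) ^ p ≤ 1/2 * z1 ^ p + 1/2 * z2 ^ p := by
    have := Real.rpow_arith_mean_le_arith_mean_rpow (Finset.univ : Finset (Fin 2))
      ![1/2, 1/2] ![z1, z2] (by intro i _; fin_cases i <;> norm_num)
      (by simp [Fin.sum_univ_two]; norm_num) (by intro i _; fin_cases i <;> simp [hz1n, hz2n]) hp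
    simpa [Fin.sum_univ_two] using this
  have hstep : (|a.1 - a.2|/2) ^ p ≤ ((z1 + z2)/2) ^ p :=
    Real.rpow_le_rpow (by positivity) hmid hp0.le
  have : lpp p a (diagProj a) = 2 * (|a.1 - a.2|/2) ^ p := by
    simp only [lpp, diagProj, h1, h2]; ring
  rw [this]
  have : lpp p a (t, t) = z1 ^ p + z2 ^ p := by simp [lpp, hz1, hz2]
  rw [this]
  calc 2 * (|a.1 - a.2|/2) ^ p ≤ 2 * ((z1+z2)/2) ^ p := by linarith
    _ = 2 * ((1:ℝ)/2 * z1 + 1/2 * z2) ^ p := by ring_nf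
    _ ≤ 2 * (1/2 * z1 ^ p + 1/2 * z2 ^ p) := by linarith
    _ = z1 ^ p + z2 ^ p := by ring

section Glue
set_option linter.unusedSectionVars false
variable {X1 X2 X3 : Type} [Fintype X1] [Fintype X2] [Fintype X3]
variable {Y1 Y2 Y3 : Type} [Fintype Y1] [Fintype Y2] [Fintype Y3]

noncomputable def gV3 (μ2 : X2 → ℝ) (π12 : X1 → X2 → ℝ) (π23 : X2 → X3 → ℝ) :
    X1 → X2 → X3 → ℝ := fun x y z => π12 x y * π23 y z / μ2 y

noncomputable def gE3 (ν2 : Y2 → ℝ) (π12 : Option Y1 → Option Y2 → ℝ)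
    (π23 : Option Y2 → Option Y3 → ℝ) :
    Option Y1 → Option Y2 → Option Y3 → ℝ
  | some y1, some y, c => π12 (some y1) (some y) * π23 (some y) c / ν2 y
  | none, some y, some y3 => π12 none (some y) * π23 (some y) (some y3) / ν2 y
  | none, some _, none => 0
  | some y1, none, none => π12 (some y1) none
  | none, none, some y3 => π23 none (some y3)
  | some _, none, some _ => 0
  | none, none, none => 0

variable {μ1 : X1 → ℝ} {μ2 : X2 → ℝ} {μ3 : X3 → ℝ}
  {ν1 : Y1 → ℝ} {ν2 : Y2 → ℝ} {ν3 : Y3 → ℝ}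
  {πv12 : X1 → X2 → ℝ} {πv23 : X2 → X3 → ℝ}
  {πe12 : Option Y1 → Option Y2 → ℝ} {πe23 : Option Y2 → Option Y3 → ℝ}

lemma gV3_nonneg (hμ2 : ∀ x, 0 < μ2 x) (h12 : IsCoupling μ1 μ2 πv12)
    (h23 : IsCoupling μ2 μ3 πv23) (x y z) : 0 ≤ gV3 μ2 πv12 πv23 x y z := by
  have := h12.1 x y; have := h23.1 y z; have := (hμ2 y).le
  unfold gV3; positivity

lemma gV3_sum3 (hμ2 : ∀ x, 0 < μ2 x) (h23 : IsCoupling μ2 μ3 πv23) (x y) :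
    ∑ z, gV3 μ2 πv12 πv23 x y z = πv12 x y := by
  unfold gV3
  rw [← Finset.sum_div, ← Finset.mul_sum, h23.2.1 y, mul_div_assoc,
    div_self (hμ2 y).ne', mul_one]

lemma gV3_sum1 (hμ2 : ∀ x, 0 < μ2 x) (h12 : IsCoupling μ1 μ2 πv12) (y z) :
    ∑ x, gV3 μ2 πv12 πv23 x y z = πv23 y z := by
  unfold gV3
  rw [← Finset.sum_div, ← Finset.sum_mul, h12.2.2 y]
  field_simp [(hμ2 y).ne']

lemma gV_coupling (hμ2 : ∀ x, 0 < μ2 x) (h12 : IsCoupling μ1 μ2 πv12)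
    (h23 : IsCoupling μ2 μ3 πv23) :
    IsCoupling μ1 μ3 (fun x z => ∑ y, gV3 μ2 πv12 πv23 x y z) := by
  refine ⟨fun x z => Finset.sum_nonneg fun y _ => gV3_nonneg hμ2 h12 h23 x y z, ?_, ?_⟩
  · intro x
    rw [Finset.sum_comm]
    calc ∑ y, ∑ z, gV3 μ2 πv12 πv23 x y z = ∑ y, πv12 x y :=
        Finset.sum_congr rfl fun y _ => gV3_sum3 hμ2 h23 x y
      _ = μ1 x := h12.2.1 x
  · intro z
    calc ∑ x, ∑ y, gV3 μ2 πv12 πv23 x y z = ∑ y, ∑ x, gV3 μ2 πv12 πv23 x y z :=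
        Finset.sum_comm
      _ = ∑ y, πv23 y z := Finset.sum_congr rfl fun y _ => gV3_sum1 hμ2 h12 y z
      _ = μ3 z := h23.2.2 z

lemma gE3_nonneg (hν2 : ∀ y, 0 < ν2 y) (h12 : IsAdmissible ν1 ν2 πe12)
    (h23 : IsAdmissible ν2 ν3 πe23) (a b c) : 0 ≤ gE3 ν2 πe12 πe23 a b c := by
  rcases a with _ | y1 <;> rcases b with _ | y2 <;> rcases c with _ | y3 <;>
    simp only [gE3] <;>
    first
      | exact le_refl 0
      | exact div_nonneg (mul_nonneg (h12.1 _ _) (h23.1 _ _)) (hν2 _).le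
      | exact h12.1 _ _
      | exact h23.1 _ _

lemma gE3_sum3_eq (hν2 : ∀ y, 0 < ν2 y) (h23 : IsAdmissible ν2 ν3 πe23) (y1 : Y1) (b) :
    ∑ c, gE3 ν2 πe12 πe23 (some y1) b c = πe12 (some y1) b := by
  rcases b with _ | y2
  · rw [Fintype.sum_option]; simp [gE3]
  · rw [Fintype.sum_option]
    simp only [gE3]
    rw [← Fintype.sum_option (fun c => πe12 (some y1) (some y2) * πe23 (some y2) c / ν2 y2),
      ← Finset.sum_div, ← Finset.mul_sum, h23.2.1 y2, mul_div_assoc,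
      div_self (hν2 y2).ne', mul_one]

lemma gE3_sum3_le (hν2 : ∀ y, 0 < ν2 y) (h12 : IsAdmissible ν1 ν2 πe12)
    (h23 : IsAdmissible ν2 ν3 πe23) (a b) (h : ¬(a = none ∧ b = none)) :
    ∑ c, gE3 ν2 πe12 πe23 a b c ≤ πe12 a b := by
  rcases a with _ | y1
  · rcases b with _ | y2
    · exact absurd ⟨rfl, rfl⟩ h
    · rw [Fintype.sum_option]
      simp only [gE3]
      rw [zero_add]
      have hS : ∑ y3 : Y3, πe23 (some y2) (some y3) ≤ ν2 y2 := by
        rw [← h23.2.1 y2, Fintype.sum_option]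
        exact le_add_of_nonneg_left (h23.1 _ _)
      calc ∑ y3 : Y3, πe12 none (some y2) * πe23 (some y2) (some y3) / ν2 y2
          = πe12 none (some y2) * (∑ y3 : Y3, πe23 (some y2) (some y3)) / ν2 y2 := by
            rw [← Finset.sum_div, ← Finset.mul_sum]
        _ ≤ πe12 none (some y2) * ν2 y2 / ν2 y2 := by
            apply div_le_div_of_nonneg_right ?_ (hν2 y2).le |>.trans_eq rfl
            exact mul_le_mul_of_nonneg_left hS (h12.1 _ _)
        _ = πe12 none (some y2) := by
            rw [mul_div_assoc, div_self (hν2 y2).ne', mul_one]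
  · exact le_of_eq (gE3_sum3_eq hν2 h23 y1 b)

lemma gE3_sum1_eq_some (hν2 : ∀ y, 0 < ν2 y) (h12 : IsAdmissible ν1 ν2 πe12) (b) (y3 : Y3) :
    ∑ a, gE3 ν2 πe12 πe23 a b (some y3) = πe23 b (some y3) := by
  rcases b with _ | y2
  · rw [Fintype.sum_option]; simp [gE3]
  · rw [Fintype.sum_option]
    simp only [gE3]
    rw [← Fintype.sum_option (fun a => πe12 a (some y2) * πe23 (some y2) (some y3) / ν2 y2),
      ← Finset.sum_div, ← Finset.sum_mul, h12.2.2.1 y2]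
    field_simp [(hν2 y2).ne']

lemma gE3_sum1_le (hν2 : ∀ y, 0 < ν2 y) (h12 : IsAdmissible ν1 ν2 πe12)
    (h23 : IsAdmissible ν2 ν3 πe23) (b c) (h : ¬(b = none ∧ c = none)) :
    ∑ a, gE3 ν2 πe12 πe23 a b c ≤ πe23 b c := by
  rcases c with _ | y3
  · rcases b with _ | y2
    · exact absurd ⟨rfl, rfl⟩ h
    · rw [Fintype.sum_option]
      simp only [gE3]
      rw [zero_add]
      have hS : ∑ y1 : Y1, πe12 (some y1) (some y2) ≤ ν2 y2 := by
        rw [← h12.2.2.1 y2, Fintype.sum_option]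
        exact le_add_of_nonneg_left (h12.1 _ _)
      calc ∑ y1 : Y1, πe12 (some y1) (some y2) * πe23 (some y2) none / ν2 y2
          = (∑ y1 : Y1, πe12 (some y1) (some y2)) * πe23 (some y2) none / ν2 y2 := by
            rw [← Finset.sum_div, ← Finset.sum_mul]
        _ ≤ ν2 y2 * πe23 (some y2) none / ν2 y2 := by
            apply div_le_div_of_nonneg_right ?_ (hν2 y2).le |>.trans_eq rfl
            exact mul_le_mul_of_nonneg_right hS (h23.1 _ _)
        _ = πe23 (some y2) none := by
            rw [mul_comm, mul_div_assoc, div_self (hν2 y2).ne', mul_one]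
  · exact le_of_eq (gE3_sum1_eq_some hν2 h12 b y3)

lemma gE_admissible (hν2 : ∀ y, 0 < ν2 y) (h12 : IsAdmissible ν1 ν2 πe12)
    (h23 : IsAdmissible ν2 ν3 πe23) :
    IsAdmissible ν1 ν3 (fun a c => ∑ b, gE3 ν2 πe12 πe23 a b c) := by
  refine ⟨fun a c => Finset.sum_nonneg fun b _ => gE3_nonneg hν2 h12 h23 a b c, ?_, ?_, ?_⟩
  · intro y1
    rw [Finset.sum_comm]
    calc ∑ b, ∑ c, gE3 ν2 πe12 πe23 (some y1) b c = ∑ b, πe12 (some y1) b :=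
        Finset.sum_congr rfl fun b _ => gE3_sum3_eq hν2 h23 y1 b
      _ = ν1 y1 := h12.2.1 y1
  · intro y3
    calc ∑ a, ∑ b, gE3 ν2 πe12 πe23 a b (some y3)
        = ∑ b, ∑ a, gE3 ν2 πe12 πe23 a b (some y3) := Finset.sum_comm
      _ = ∑ b, πe23 b (some y3) :=
        Finset.sum_congr rfl fun b _ => gE3_sum1_eq_some hν2 h12 b y3
      _ = ν3 y3 := h23.2.2.1 y3
  · show ∑ b, gE3 ν2 πe12 πe23 none b none = 0
    rw [Fintype.sum_option]; simp [gE3]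

lemma gV3_marg12 (hμ2 : ∀ x, 0 < μ2 x) (h23 : IsCoupling μ2 μ3 πv23) (F : X1 → X2 → ℝ) :
    ∑ t : X1 × X2 × X3, gV3 μ2 πv12 πv23 t.1 t.2.1 t.2.2 * F t.1 t.2.1
      = ∑ x1, ∑ x2, πv12 x1 x2 * F x1 x2 := by
  rw [Fintype.sum_prod_type]; dsimp only
  refine Finset.sum_congr rfl fun x1 _ => ?_
  rw [Fintype.sum_prod_type]; dsimp only
  refine Finset.sum_congr rfl fun x2 _ => ?_
  rw [← Finset.sum_mul, gV3_sum3 hμ2 h23]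

lemma gV3_marg23 (hμ2 : ∀ x, 0 < μ2 x) (h12 : IsCoupling μ1 μ2 πv12) (F : X2 → X3 → ℝ) :
    ∑ t : X1 × X2 × X3, gV3 μ2 πv12 πv23 t.1 t.2.1 t.2.2 * F t.2.1 t.2.2
      = ∑ x2, ∑ x3, πv23 x2 x3 * F x2 x3 := by
  rw [Fintype.sum_prod_type]; dsimp only; rw [Finset.sum_comm]
  rw [Fintype.sum_prod_type]; dsimp only
  refine Finset.sum_congr rfl fun x2 _ => ?_
  refine Finset.sum_congr rfl fun x3 _ => ?_
  rw [← Finset.sum_mul, gV3_sum1 hμ2 h12]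

lemma gV3_marg13 (F : X1 → X3 → ℝ) :
    ∑ t : X1 × X2 × X3, gV3 μ2 πv12 πv23 t.1 t.2.1 t.2.2 * F t.1 t.2.2
      = ∑ x1, ∑ x3, (∑ x2, gV3 μ2 πv12 πv23 x1 x2 x3) * F x1 x3 := by
  rw [Fintype.sum_prod_type]; dsimp only
  refine Finset.sum_congr rfl fun x1 _ => ?_
  rw [Fintype.sum_prod_type]; dsimp only; rw [Finset.sum_comm]
  refine Finset.sum_congr rfl fun x3 _ => ?_
  rw [← Finset.sum_mul]

lemma gE3_marg13 (F : Option Y1 → Option Y3 → ℝ) :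
    ∑ u : Option Y1 × Option Y2 × Option Y3,
        gE3 ν2 πe12 πe23 u.1 u.2.1 u.2.2 * F u.1 u.2.2
      = ∑ a, ∑ c, (∑ b, gE3 ν2 πe12 πe23 a b c) * F a c := by
  rw [Fintype.sum_prod_type]; dsimp only
  refine Finset.sum_congr rfl fun a _ => ?_
  rw [Fintype.sum_prod_type]; dsimp only; rw [Finset.sum_comm]
  refine Finset.sum_congr rfl fun c _ => ?_
  rw [← Finset.sum_mul]

lemma gE3_marg12_le (hν2 : ∀ y, 0 < ν2 y) (h12 : IsAdmissible ν1 ν2 πe12)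
    (h23 : IsAdmissible ν2 ν3 πe23) (F : Option Y1 → Option Y2 → ℝ)
    (hF : ∀ a b, 0 ≤ F a b) (hF0 : F none none = 0) :
    ∑ u : Option Y1 × Option Y2 × Option Y3,
        gE3 ν2 πe12 πe23 u.1 u.2.1 u.2.2 * F u.1 u.2.1
      ≤ ∑ a, ∑ b, πe12 a b * F a b := by
  rw [Fintype.sum_prod_type]; dsimp only
  refine Finset.sum_le_sum fun a _ => ?_
  rw [Fintype.sum_prod_type]; dsimp only
  refine Finset.sum_le_sum fun b _ => ?_
  rw [← Finset.sum_mul]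
  by_cases h : a = none ∧ b = none
  · obtain ⟨rfl, rfl⟩ := h
    rw [hF0, mul_zero, mul_zero]
  · exact mul_le_mul_of_nonneg_right (gE3_sum3_le hν2 h12 h23 a b h) (hF a b)

lemma gE3_marg23_le (hν2 : ∀ y, 0 < ν2 y) (h12 : IsAdmissible ν1 ν2 πe12)
    (h23 : IsAdmissible ν2 ν3 πe23) (F : Option Y2 → Option Y3 → ℝ)
    (hF : ∀ b c, 0 ≤ F b c) (hF0 : F none none = 0) :
    ∑ u : Option Y1 × Option Y2 × Option Y3,
        gE3 ν2 πe12 πe23 u.1 u.2.1 u.2.2 * F u.2.1 u.2.2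
      ≤ ∑ b, ∑ c, πe23 b c * F b c := by
  rw [Fintype.sum_prod_type]; dsimp only; rw [Finset.sum_comm, Fintype.sum_prod_type]; dsimp only
  refine Finset.sum_le_sum fun b _ => ?_
  refine Finset.sum_le_sum fun c _ => ?_
  rw [← Finset.sum_mul]
  by_cases h : b = none ∧ c = none
  · obtain ⟨rfl, rfl⟩ := h
    rw [hF0, mul_zero, mul_zero]
  · exact mul_le_mul_of_nonneg_right (gE3_sum1_le hν2 h12 h23 b c h) (hF b c)
end Glue


lemma pdCost_nonneg {Y Y' : Type*} (p : ℝ) (ι : Y → ℝ × ℝ) (ι' : Y' → ℝ × ℝ) (a b) :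
    0 ≤ pdCost p ι ι' a b := by
  rcases a with _ | y <;> rcases b with _ | y' <;>
    first | exact le_refl 0 | exact lpp_nonneg _ _ _

lemma lpp_diag_min' {p : ℝ} (hp : 1 ≤ p) (a b : ℝ × ℝ) :
    lpp p a (diagProj a) ≤ lpp p a (diagProj b) := by
  have := lpp_diag_min hp a ((b.1 + b.2)/2)
  simpa [diagProj] using this

section Rep
variable {Y1 Y2 Y3 : Type} (ι1 : Y1 → ℝ × ℝ) (ι2 : Y2 → ℝ × ℝ) (ι3 : Y3 → ℝ × ℝ)

noncomputable def rep :
    Option Y1 → Option Y2 → Option Y3 → (ℝ × ℝ) × (ℝ × ℝ) × (ℝ × ℝ)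
  | some a, some b, some c => (ι1 a, ι2 b, ι3 c)
  | some a, some b, none => (ι1 a, ι2 b, diagProj (ι2 b))
  | none, some b, some c => (diagProj (ι2 b), ι2 b, ι3 c)
  | none, some b, none => (diagProj (ι2 b), ι2 b, diagProj (ι2 b))
  | some a, none, none => (ι1 a, diagProj (ι1 a), diagProj (ι1 a))
  | none, none, some c => (diagProj (ι3 c), diagProj (ι3 c), ι3 c)
  | some a, none, some c => (ι1 a, diagProj (ι1 a), ι3 c)
  | none, none, none => ((0,0),(0,0),(0,0))

lemma rep12 {p : ℝ} (hp : p ≠ 0) (a b c) :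
    lpp p (rep ι1 ι2 ι3 a b c).1 (rep ι1 ι2 ι3 a b c).2.1 = pdCost p ι1 ι2 a b := by
  rcases a with _ | y1 <;> rcases b with _ | y2 <;> rcases c with _ | y3 <;>
    simp [rep, pdCost, lpp_self p hp]

lemma rep23 {p : ℝ} (hp : p ≠ 0) (a b c) (h : ¬(a ≠ none ∧ b = none ∧ c ≠ none)) :
    lpp p (rep ι1 ι2 ι3 a b c).2.1 (rep ι1 ι2 ι3 a b c).2.2 = pdCost p ι2 ι3 b c := by
  rcases a with _ | y1 <;> rcases b with _ | y2 <;> rcases c with _ | y3 <;>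
    simp only [rep, pdCost, lpp_self p hp]
  · exact absurd ⟨by simp, rfl, by simp⟩ h

lemma rep13 {p : ℝ} (hp : 1 ≤ p) (a b c) (h : ¬(a ≠ none ∧ b = none ∧ c ≠ none)) :
    pdCost p ι1 ι3 a c ≤ lpp p (rep ι1 ι2 ι3 a b c).1 (rep ι1 ι2 ι3 a b c).2.2 := by
  have hp0 : p ≠ 0 := by intro h0; rw [h0] at hp; linarith
  rcases a with _ | y1 <;> rcases b with _ | y2 <;> rcases c with _ | y3 <;>
    simp only [rep, pdCost]
  · exact lpp_nonneg _ _ _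
  · exact le_of_eq rfl
  · exact lpp_nonneg _ _ _
  · calc lpp p (diagProj (ι3 y3)) (ι3 y3) = lpp p (ι3 y3) (diagProj (ι3 y3)) :=
        lpp_comm _ _ _
      _ ≤ lpp p (ι3 y3) (diagProj (ι2 y2)) := lpp_diag_min' hp _ _
      _ = lpp p (diagProj (ι2 y2)) (ι3 y3) := lpp_comm _ _ _
  · exact le_of_eq rfl
  · exact absurd ⟨by simp, rfl, by simp⟩ h
  · exact lpp_diag_min' hp _ _
  · exact le_refl _
end Rep


noncomputable def compo (v : ℝ × ℝ) : Fin 2 → ℝ := fun r => if r = 0 then v.1 else v.2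

lemma compo_lpp (p : ℝ) (v w : ℝ × ℝ) :
    ∑ r : Fin 2, |compo v r - compo w r| ^ p = lpp p v w := by
  rw [Fin.sum_univ_two]
  simp only [compo]
  norm_num [lpp]

lemma tpotObj_nonneg (p : ℝ) (P P' : FinTopNet) (πv : P.X → P'.X → ℝ)
    (πe : Option P.Y → Option P'.Y → ℝ)
    (hv : ∀ a b, 0 ≤ πv a b) (he : ∀ a b, 0 ≤ πe a b) :
    0 ≤ tpotObj p P P' πv πe := by
  unfold tpotObj
  refine add_nonneg (add_nonneg ?_ ?_) ?_
  · exact Finset.sum_nonneg fun a _ => Finset.sum_nonneg fun c _ =>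
      mul_nonneg (pdCost_nonneg _ _ _ _ _) (he a c)
  · refine Finset.sum_nonneg fun _ _ => Finset.sum_nonneg fun _ _ =>
      Finset.sum_nonneg fun _ _ => Finset.sum_nonneg fun _ _ => ?_
    exact mul_nonneg (mul_nonneg (Real.rpow_nonneg (abs_nonneg _) _) (hv _ _)) (hv _ _)
  · refine Finset.sum_nonneg fun _ _ => Finset.sum_nonneg fun _ _ =>
      Finset.sum_nonneg fun _ _ => Finset.sum_nonneg fun _ _ => ?_
    exact mul_nonneg (mul_nonneg (Real.rpow_nonneg (abs_nonneg _) _) (hv _ _)) (he _ _)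

lemma key_ineq (p : ℝ) (hp : 1 ≤ p) (P₁ P₂ P₃ : FinTopNet) (h₂ : P₂.Valid)
    (πv12 : P₁.X → P₂.X → ℝ) (πe12 : Option P₁.Y → Option P₂.Y → ℝ)
    (πv23 : P₂.X → P₃.X → ℝ) (πe23 : Option P₂.Y → Option P₃.Y → ℝ)
    (hc12 : IsCoupling P₁.μ P₂.μ πv12) (he12 : IsAdmissible P₁.ν P₂.ν πe12)
    (hc23 : IsCoupling P₂.μ P₃.μ πv23) (he23 : IsAdmissible P₂.ν P₃.ν πe23) :
    tpotObj p P₁ P₃ (fun x z => ∑ y, gV3 P₂.μ πv12 πv23 x y z)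
        (fun a c => ∑ b, gE3 P₂.ν πe12 πe23 a b c) ^ (1/p)
      ≤ tpotObj p P₁ P₂ πv12 πe12 ^ (1/p) + tpotObj p P₂ P₃ πv23 πe23 ^ (1/p) := by
  obtain ⟨hk2, hμ2, hμ2sum, hν2⟩ := h₂
  have hp0 : (0:ℝ) < p := lt_of_lt_of_le one_pos hp
  have hpne : p ≠ 0 := hp0.ne'
  set G := gV3 P₂.μ πv12 πv23 with hG
  set H := gE3 P₂.ν πe12 πe23 with hH
  set R := rep P₁.ι P₂.ι P₃.ι with hR
  -- index type
  set T := P₁.X × P₂.X × P₃.X with hT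
  set U := Option P₁.Y × Option P₂.Y × Option P₃.Y with hU
  -- weights and coordinate functions
  set w : (U × Fin 2) ⊕ ((T × T) ⊕ (T × U)) → ℝ :=
    Sum.elim (fun u => H u.1.1 u.1.2.1 u.1.2.2)
      (Sum.elim (fun q => G q.1.1 q.1.2.1 q.1.2.2 * G q.2.1 q.2.2.1 q.2.2.2)
        (fun q => G q.1.1 q.1.2.1 q.1.2.2 * H q.2.1 q.2.2.1 q.2.2.2)) with hw
  set f : (U × Fin 2) ⊕ ((T × T) ⊕ (T × U)) → ℝ :=
    Sum.elim (fun u => compo (R u.1.1 u.1.2.1 u.1.2.2).1 u.2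
        - compo (R u.1.1 u.1.2.1 u.1.2.2).2.1 u.2)
      (Sum.elim (fun q => P₁.k q.1.1 q.2.1 - P₂.k q.1.2.1 q.2.2.1)
        (fun q => ωbar P₁.ω q.1.1 q.2.1 - ωbar P₂.ω q.1.2.1 q.2.2.1)) with hf
  set g : (U × Fin 2) ⊕ ((T × T) ⊕ (T × U)) → ℝ :=
    Sum.elim (fun u => compo (R u.1.1 u.1.2.1 u.1.2.2).2.1 u.2
        - compo (R u.1.1 u.1.2.1 u.1.2.2).2.2 u.2)
      (Sum.elim (fun q => P₂.k q.1.2.1 q.2.2.1 - P₃.k q.1.2.2 q.2.2.2)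
        (fun q => ωbar P₂.ω q.1.2.1 q.2.2.1 - ωbar P₃.ω q.1.2.2 q.2.2.2)) with hg
  have hGnn : ∀ x y z, 0 ≤ G x y z := fun x y z => gV3_nonneg hμ2 hc12 hc23 x y z
  have hHnn : ∀ a b c, 0 ≤ H a b c := fun a b c => gE3_nonneg hν2 he12 he23 a b c
  have hwnn : ∀ i, 0 ≤ w i := by
    rintro (⟨u, r⟩ | (q | q))
    · exact hHnn _ _ _
    · exact mul_nonneg (hGnn _ _ _) (hGnn _ _ _)
    · exact mul_nonneg (hGnn _ _ _) (hHnn _ _ _)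
  -- a generic expansion of sums over the index type
  have expand : ∀ (φ : (U × Fin 2) ⊕ ((T × T) ⊕ (T × U)) → ℝ),
      ∑ i, φ i = (∑ u : U, ∑ r : Fin 2, φ (Sum.inl (u, r)))
        + (∑ q : T × T, φ (Sum.inr (Sum.inl q)))
        + (∑ q : T × U, φ (Sum.inr (Sum.inr q))) := by
    intro φ
    rw [Fintype.sum_sum_type, Fintype.sum_sum_type, Fintype.sum_prod_type, ← add_assoc]
  -- STEP 1 : tpotObj₁₃ ≤ ∑ w |f + g|^p
  have step1 : tpotObj p P₁ P₃ (fun x z => ∑ y, G x y z) (fun a c => ∑ b, H a b c)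
      ≤ ∑ i, w i * |f i + g i| ^ p := by
    rw [expand (fun i => w i * |f i + g i| ^ p)]
    unfold tpotObj
    refine add_le_add (add_le_add ?_ ?_) ?_
    · -- pd part
      have h1 : (∑ a : Option P₁.Y, ∑ c : Option P₃.Y,
            pdCost p P₁.ι P₃.ι a c * ∑ b, H a b c)
          = ∑ u : U, H u.1 u.2.1 u.2.2 * pdCost p P₁.ι P₃.ι u.1 u.2.2 := by
        rw [gE3_marg13 (F := pdCost p P₁.ι P₃.ι)]
        exact Finset.sum_congr rfl fun a _ => Finset.sum_congr rfl fun c _ => by ring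
      rw [h1]
      have h2 : ∀ u : U, ∑ r : Fin 2, w (Sum.inl (u, r)) * |f (Sum.inl (u, r))
          + g (Sum.inl (u, r))| ^ p
          = H u.1 u.2.1 u.2.2 * lpp p (R u.1 u.2.1 u.2.2).1 (R u.1 u.2.1 u.2.2).2.2 := by
        intro u
        have : ∀ r : Fin 2, f (Sum.inl (u, r)) + g (Sum.inl (u, r))
            = compo (R u.1 u.2.1 u.2.2).1 r - compo (R u.1 u.2.1 u.2.2).2.2 r := by
          intro r; simp only [hf, hg, Sum.elim_inl]; ring
        calc ∑ r : Fin 2, w (Sum.inl (u, r)) * |f (Sum.inl (u, r)) + g (Sum.inl (u, r))| ^ p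
            = ∑ r : Fin 2, H u.1 u.2.1 u.2.2
              * |compo (R u.1 u.2.1 u.2.2).1 r - compo (R u.1 u.2.1 u.2.2).2.2 r| ^ p := by
              refine Finset.sum_congr rfl fun r _ => ?_
              rw [this r]; rfl
          _ = H u.1 u.2.1 u.2.2 * ∑ r : Fin 2,
              |compo (R u.1 u.2.1 u.2.2).1 r - compo (R u.1 u.2.1 u.2.2).2.2 r| ^ p := by
              rw [Finset.mul_sum]
          _ = _ := by rw [compo_lpp]
      calc ∑ u : U, H u.1 u.2.1 u.2.2 * pdCost p P₁.ι P₃.ι u.1 u.2.2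
          ≤ ∑ u : U, H u.1 u.2.1 u.2.2
              * lpp p (R u.1 u.2.1 u.2.2).1 (R u.1 u.2.1 u.2.2).2.2 := by
            refine Finset.sum_le_sum fun u _ => ?_
            by_cases hcase : u.1 ≠ none ∧ u.2.1 = none ∧ u.2.2 ≠ none
            · obtain ⟨ha, hb, hc⟩ := hcase
              rcases hu1 : u.1 with _ | y1; · exact absurd hu1 ha
              rcases hu3 : u.2.2 with _ | y3; · exact absurd hu3 hc
              rw [hb]
              simp only [hH, gE3]
              simp
            · exact mul_le_mul_of_nonneg_left
                (rep13 P₁.ι P₂.ι P₃.ι hp u.1 u.2.1 u.2.2 hcase) (hHnn _ _ _)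
        _ = ∑ u : U, ∑ r : Fin 2, w (Sum.inl (u, r))
              * |f (Sum.inl (u, r)) + g (Sum.inl (u, r))| ^ p :=
            (Finset.sum_congr rfl fun u _ => (h2 u)).symm
    · -- GW part : equality
      have hfg : ∀ q : T × T, f (Sum.inr (Sum.inl q)) + g (Sum.inr (Sum.inl q))
          = P₁.k q.1.1 q.2.1 - P₃.k q.1.2.2 q.2.2.2 := by
        intro q; simp only [hf, hg, Sum.elim_inr, Sum.elim_inl]; ring
      have hrhs : ∑ q : T × T, w (Sum.inr (Sum.inl q)) * |f (Sum.inr (Sum.inl q))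
            + g (Sum.inr (Sum.inl q))| ^ p
          = ∑ t1 : T, G t1.1 t1.2.1 t1.2.2 * ∑ t2 : T, G t2.1 t2.2.1 t2.2.2
              * |P₁.k t1.1 t2.1 - P₃.k t1.2.2 t2.2.2| ^ p := by
        rw [Fintype.sum_prod_type]
        refine Finset.sum_congr rfl fun t1 _ => ?_
        rw [Finset.mul_sum]
        refine Finset.sum_congr rfl fun t2 _ => ?_
        rw [hfg (t1, t2)]
        show G t1.1 t1.2.1 t1.2.2 * G t2.1 t2.2.1 t2.2.2 * _ = _
        ring
      rw [hrhs]
      have inner : ∀ t1 : T, ∑ t2 : T, G t2.1 t2.2.1 t2.2.2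
            * |P₁.k t1.1 t2.1 - P₃.k t1.2.2 t2.2.2| ^ p
          = ∑ x2, ∑ x2', (∑ y, G x2 y x2')
            * |P₁.k t1.1 x2 - P₃.k t1.2.2 x2'| ^ p := fun t1 =>
        gV3_marg13 (F := fun b d => |P₁.k t1.1 b - P₃.k t1.2.2 d| ^ p)
      have outer : ∑ t1 : T, G t1.1 t1.2.1 t1.2.2 * (∑ x2, ∑ x2', (∑ y, G x2 y x2')
            * |P₁.k t1.1 x2 - P₃.k t1.2.2 x2'| ^ p)
          = ∑ x1, ∑ x1', (∑ y, G x1 y x1') * (∑ x2, ∑ x2', (∑ y, G x2 y x2')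
            * |P₁.k x1 x2 - P₃.k x1' x2'| ^ p) :=
        gV3_marg13 (F := fun a c => ∑ x2, ∑ x2', (∑ y, G x2 y x2')
          * |P₁.k a x2 - P₃.k c x2'| ^ p)
      calc ∑ x₁, ∑ x₁', ∑ x₂, ∑ x₂', |P₁.k x₁ x₂ - P₃.k x₁' x₂'| ^ p
              * (∑ y, G x₁ y x₁') * (∑ y, G x₂ y x₂')
          = ∑ x1, ∑ x1', (∑ y, G x1 y x1') * (∑ x2, ∑ x2', (∑ y, G x2 y x2')
              * |P₁.k x1 x2 - P₃.k x1' x2'| ^ p) := by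
            refine Finset.sum_congr rfl fun x1 _ => Finset.sum_congr rfl fun x1' _ => ?_
            rw [Finset.mul_sum]
            refine Finset.sum_congr rfl fun x2 _ => ?_
            rw [Finset.mul_sum]
            exact Finset.sum_congr rfl fun x2' _ => by ring
        _ = ∑ t1 : T, G t1.1 t1.2.1 t1.2.2 * (∑ x2, ∑ x2', (∑ y, G x2 y x2')
              * |P₁.k t1.1 x2 - P₃.k t1.2.2 x2'| ^ p) := outer.symm
        _ = ∑ t1 : T, G t1.1 t1.2.1 t1.2.2 * ∑ t2 : T, G t2.1 t2.2.1 t2.2.2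
              * |P₁.k t1.1 t2.1 - P₃.k t1.2.2 t2.2.2| ^ p := by
            exact Finset.sum_congr rfl fun t1 _ => by rw [inner t1]
        _ ≤ _ := le_refl _
    · -- coOT part : equality
      have hfg : ∀ q : T × U, f (Sum.inr (Sum.inr q)) + g (Sum.inr (Sum.inr q))
          = ωbar P₁.ω q.1.1 q.2.1 - ωbar P₃.ω q.1.2.2 q.2.2.2 := by
        intro q; simp only [hf, hg, Sum.elim_inr]; ring
      have hrhs : ∑ q : T × U, w (Sum.inr (Sum.inr q)) * |f (Sum.inr (Sum.inr q))
            + g (Sum.inr (Sum.inr q))| ^ p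
          = ∑ t : T, G t.1 t.2.1 t.2.2 * ∑ u : U, H u.1 u.2.1 u.2.2
              * |ωbar P₁.ω t.1 u.1 - ωbar P₃.ω t.2.2 u.2.2| ^ p := by
        rw [Fintype.sum_prod_type]
        refine Finset.sum_congr rfl fun t _ => ?_
        rw [Finset.mul_sum]
        refine Finset.sum_congr rfl fun u _ => ?_
        rw [hfg (t, u)]
        show G t.1 t.2.1 t.2.2 * H u.1 u.2.1 u.2.2 * _ = _
        ring
      rw [hrhs]
      have inner : ∀ t : T, ∑ u : U, H u.1 u.2.1 u.2.2
            * |ωbar P₁.ω t.1 u.1 - ωbar P₃.ω t.2.2 u.2.2| ^ p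
          = ∑ a, ∑ c, (∑ b, H a b c) * |ωbar P₁.ω t.1 a - ωbar P₃.ω t.2.2 c| ^ p := fun t =>
        gE3_marg13 (F := fun a c => |ωbar P₁.ω t.1 a - ωbar P₃.ω t.2.2 c| ^ p)
      have outer : ∑ t : T, G t.1 t.2.1 t.2.2 * (∑ a, ∑ c, (∑ b, H a b c)
            * |ωbar P₁.ω t.1 a - ωbar P₃.ω t.2.2 c| ^ p)
          = ∑ x, ∑ x', (∑ y, G x y x') * (∑ a, ∑ c, (∑ b, H a b c)
            * |ωbar P₁.ω x a - ωbar P₃.ω x' c| ^ p) :=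
        gV3_marg13 (F := fun x x' => ∑ a, ∑ c, (∑ b, H a b c)
          * |ωbar P₁.ω x a - ωbar P₃.ω x' c| ^ p)
      calc ∑ x, ∑ x', ∑ a : Option P₁.Y, ∑ c : Option P₃.Y,
              |ωbar P₁.ω x a - ωbar P₃.ω x' c| ^ p * (∑ y, G x y x') * (∑ b, H a b c)
          = ∑ x, ∑ x', (∑ y, G x y x') * (∑ a, ∑ c, (∑ b, H a b c)
              * |ωbar P₁.ω x a - ωbar P₃.ω x' c| ^ p) := by
            refine Finset.sum_congr rfl fun x _ => Finset.sum_congr rfl fun x' _ => ?_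
            rw [Finset.mul_sum]
            refine Finset.sum_congr rfl fun a _ => ?_
            rw [Finset.mul_sum]
            exact Finset.sum_congr rfl fun c _ => by ring
        _ = ∑ t : T, G t.1 t.2.1 t.2.2 * (∑ a, ∑ c, (∑ b, H a b c)
              * |ωbar P₁.ω t.1 a - ωbar P₃.ω t.2.2 c| ^ p) := outer.symm
        _ = ∑ t : T, G t.1 t.2.1 t.2.2 * ∑ u : U, H u.1 u.2.1 u.2.2
              * |ωbar P₁.ω t.1 u.1 - ωbar P₃.ω t.2.2 u.2.2| ^ p :=
            Finset.sum_congr rfl fun t _ => by rw [inner t]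
        _ ≤ _ := le_refl _
  -- STEP 2 : ∑ w |f|^p ≤ tpotObj₁₂
  have step2 : ∑ i, w i * |f i| ^ p ≤ tpotObj p P₁ P₂ πv12 πe12 := by
    rw [expand (fun i => w i * |f i| ^ p)]
    unfold tpotObj
    refine add_le_add (add_le_add ?_ ?_) ?_
    · -- pd part
      have h2 : ∀ u : U, ∑ r : Fin 2, w (Sum.inl (u, r)) * |f (Sum.inl (u, r))| ^ p
          = H u.1 u.2.1 u.2.2 * pdCost p P₁.ι P₂.ι u.1 u.2.1 := by
        intro u
        calc ∑ r : Fin 2, w (Sum.inl (u, r)) * |f (Sum.inl (u, r))| ^ p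
            = H u.1 u.2.1 u.2.2 * ∑ r : Fin 2,
              |compo (R u.1 u.2.1 u.2.2).1 r - compo (R u.1 u.2.1 u.2.2).2.1 r| ^ p := by
              rw [Finset.mul_sum]; rfl
          _ = H u.1 u.2.1 u.2.2
              * lpp p (R u.1 u.2.1 u.2.2).1 (R u.1 u.2.1 u.2.2).2.1 := by rw [compo_lpp]
          _ = _ := by rw [hR, rep12 P₁.ι P₂.ι P₃.ι hpne]
      calc ∑ u : U, ∑ r : Fin 2, w (Sum.inl (u, r)) * |f (Sum.inl (u, r))| ^ p
          = ∑ u : U, H u.1 u.2.1 u.2.2 * pdCost p P₁.ι P₂.ι u.1 u.2.1 :=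
            Finset.sum_congr rfl fun u _ => h2 u
        _ ≤ ∑ a, ∑ b, πe12 a b * pdCost p P₁.ι P₂.ι a b :=
            gE3_marg12_le hν2 he12 he23 (pdCost p P₁.ι P₂.ι)
              (fun a b => pdCost_nonneg _ _ _ _ _) rfl
        _ = ∑ a, ∑ b, pdCost p P₁.ι P₂.ι a b * πe12 a b :=
            Finset.sum_congr rfl fun a _ => Finset.sum_congr rfl fun b _ => by ring
    · -- GW part
      have hrhs : ∑ q : T × T, w (Sum.inr (Sum.inl q)) * |f (Sum.inr (Sum.inl q))| ^ p
          = ∑ t1 : T, G t1.1 t1.2.1 t1.2.2 * ∑ t2 : T, G t2.1 t2.2.1 t2.2.2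
              * |P₁.k t1.1 t2.1 - P₂.k t1.2.1 t2.2.1| ^ p := by
        rw [Fintype.sum_prod_type]
        refine Finset.sum_congr rfl fun t1 _ => ?_
        rw [Finset.mul_sum]
        refine Finset.sum_congr rfl fun t2 _ => ?_
        have hfv : f (Sum.inr (Sum.inl (t1, t2))) = P₁.k t1.1 t2.1 - P₂.k t1.2.1 t2.2.1 := rfl
        rw [hfv]
        show G t1.1 t1.2.1 t1.2.2 * G t2.1 t2.2.1 t2.2.2 * _ = _
        ring
      rw [hrhs]
      have inner : ∀ t1 : T, ∑ t2 : T, G t2.1 t2.2.1 t2.2.2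
            * |P₁.k t1.1 t2.1 - P₂.k t1.2.1 t2.2.1| ^ p
          = ∑ x2, ∑ x2', πv12 x2 x2' * |P₁.k t1.1 x2 - P₂.k t1.2.1 x2'| ^ p := fun t1 =>
        gV3_marg12 hμ2 hc23 (F := fun b d => |P₁.k t1.1 b - P₂.k t1.2.1 d| ^ p)
      have outer : ∑ t1 : T, G t1.1 t1.2.1 t1.2.2 * (∑ x2, ∑ x2', πv12 x2 x2'
            * |P₁.k t1.1 x2 - P₂.k t1.2.1 x2'| ^ p)
          = ∑ x1, ∑ x1', πv12 x1 x1' * (∑ x2, ∑ x2', πv12 x2 x2'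
            * |P₁.k x1 x2 - P₂.k x1' x2'| ^ p) :=
        gV3_marg12 hμ2 hc23 (F := fun a c => ∑ x2, ∑ x2', πv12 x2 x2'
          * |P₁.k a x2 - P₂.k c x2'| ^ p)
      calc ∑ t1 : T, G t1.1 t1.2.1 t1.2.2 * ∑ t2 : T, G t2.1 t2.2.1 t2.2.2
              * |P₁.k t1.1 t2.1 - P₂.k t1.2.1 t2.2.1| ^ p
          = ∑ t1 : T, G t1.1 t1.2.1 t1.2.2 * (∑ x2, ∑ x2', πv12 x2 x2'
              * |P₁.k t1.1 x2 - P₂.k t1.2.1 x2'| ^ p) :=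
            Finset.sum_congr rfl fun t1 _ => by rw [inner t1]
        _ = ∑ x1, ∑ x1', πv12 x1 x1' * (∑ x2, ∑ x2', πv12 x2 x2'
              * |P₁.k x1 x2 - P₂.k x1' x2'| ^ p) := outer
        _ = ∑ x₁, ∑ x₁', ∑ x₂, ∑ x₂', |P₁.k x₁ x₂ - P₂.k x₁' x₂'| ^ p
              * πv12 x₁ x₁' * πv12 x₂ x₂' := by
            refine Finset.sum_congr rfl fun x1 _ => Finset.sum_congr rfl fun x1' _ => ?_
            rw [Finset.mul_sum]
            refine Finset.sum_congr rfl fun x2 _ => ?_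
            rw [Finset.mul_sum]
            exact Finset.sum_congr rfl fun x2' _ => by ring
        _ ≤ _ := le_refl _
    · -- coOT part
      have hrhs : ∑ q : T × U, w (Sum.inr (Sum.inr q)) * |f (Sum.inr (Sum.inr q))| ^ p
          = ∑ t : T, G t.1 t.2.1 t.2.2 * ∑ u : U, H u.1 u.2.1 u.2.2
              * |ωbar P₁.ω t.1 u.1 - ωbar P₂.ω t.2.1 u.2.1| ^ p := by
        rw [Fintype.sum_prod_type]
        refine Finset.sum_congr rfl fun t _ => ?_
        rw [Finset.mul_sum]
        refine Finset.sum_congr rfl fun u _ => ?_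
        have hfv : f (Sum.inr (Sum.inr (t, u)))
            = ωbar P₁.ω t.1 u.1 - ωbar P₂.ω t.2.1 u.2.1 := rfl
        rw [hfv]
        show G t.1 t.2.1 t.2.2 * H u.1 u.2.1 u.2.2 * _ = _
        ring
      rw [hrhs]
      have inner : ∀ t : T, ∑ u : U, H u.1 u.2.1 u.2.2
            * |ωbar P₁.ω t.1 u.1 - ωbar P₂.ω t.2.1 u.2.1| ^ p
          ≤ ∑ a, ∑ b, πe12 a b * |ωbar P₁.ω t.1 a - ωbar P₂.ω t.2.1 b| ^ p := by
        intro t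
        refine gE3_marg12_le hν2 he12 he23
          (fun a b => |ωbar P₁.ω t.1 a - ωbar P₂.ω t.2.1 b| ^ p)
          (fun a b => Real.rpow_nonneg (abs_nonneg _) _) ?_
        simp [ωbar, Real.zero_rpow hpne]
      calc ∑ t : T, G t.1 t.2.1 t.2.2 * ∑ u : U, H u.1 u.2.1 u.2.2
              * |ωbar P₁.ω t.1 u.1 - ωbar P₂.ω t.2.1 u.2.1| ^ p
          ≤ ∑ t : T, G t.1 t.2.1 t.2.2 * (∑ a, ∑ b, πe12 a b
              * |ωbar P₁.ω t.1 a - ωbar P₂.ω t.2.1 b| ^ p) :=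
            Finset.sum_le_sum fun t _ =>
              mul_le_mul_of_nonneg_left (inner t) (hGnn _ _ _)
        _ = ∑ x, ∑ x', πv12 x x' * (∑ a, ∑ b, πe12 a b
              * |ωbar P₁.ω x a - ωbar P₂.ω x' b| ^ p) :=
            gV3_marg12 hμ2 hc23 (F := fun x x' => ∑ a, ∑ b, πe12 a b
              * |ωbar P₁.ω x a - ωbar P₂.ω x' b| ^ p)
        _ = ∑ x, ∑ x', ∑ a : Option P₁.Y, ∑ b : Option P₂.Y,
              |ωbar P₁.ω x a - ωbar P₂.ω x' b| ^ p * πv12 x x' * πe12 a b := by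
            refine Finset.sum_congr rfl fun x _ => Finset.sum_congr rfl fun x' _ => ?_
            rw [Finset.mul_sum]
            refine Finset.sum_congr rfl fun a _ => ?_
            rw [Finset.mul_sum]
            exact Finset.sum_congr rfl fun b _ => by ring
  -- STEP 3 : ∑ w |g|^p ≤ tpotObj₂₃
  have step3 : ∑ i, w i * |g i| ^ p ≤ tpotObj p P₂ P₃ πv23 πe23 := by
    rw [expand (fun i => w i * |g i| ^ p)]
    unfold tpotObj
    refine add_le_add (add_le_add ?_ ?_) ?_
    · -- pd part
      have h2 : ∀ u : U, ∑ r : Fin 2, w (Sum.inl (u, r)) * |g (Sum.inl (u, r))| ^ p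
          = H u.1 u.2.1 u.2.2 * pdCost p P₂.ι P₃.ι u.2.1 u.2.2 := by
        intro u
        have e1 : ∑ r : Fin 2, w (Sum.inl (u, r)) * |g (Sum.inl (u, r))| ^ p
            = H u.1 u.2.1 u.2.2
              * lpp p (R u.1 u.2.1 u.2.2).2.1 (R u.1 u.2.1 u.2.2).2.2 := by
          rw [← compo_lpp p, Finset.mul_sum]; rfl
        rw [e1]
        by_cases hcase : u.1 ≠ none ∧ u.2.1 = none ∧ u.2.2 ≠ none
        · obtain ⟨ha, hb, hc⟩ := hcase
          rcases hu1 : u.1 with _ | y1; · exact absurd hu1 ha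
          rcases hu3 : u.2.2 with _ | y3; · exact absurd hu3 hc
          rw [hb]
          simp only [hH, gE3]
          simp
        · rw [hR, rep23 P₁.ι P₂.ι P₃.ι hpne u.1 u.2.1 u.2.2 hcase]
      calc ∑ u : U, ∑ r : Fin 2, w (Sum.inl (u, r)) * |g (Sum.inl (u, r))| ^ p
          = ∑ u : U, H u.1 u.2.1 u.2.2 * pdCost p P₂.ι P₃.ι u.2.1 u.2.2 :=
            Finset.sum_congr rfl fun u _ => h2 u
        _ ≤ ∑ b, ∑ c, πe23 b c * pdCost p P₂.ι P₃.ι b c :=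
            gE3_marg23_le hν2 he12 he23 (pdCost p P₂.ι P₃.ι)
              (fun a b => pdCost_nonneg _ _ _ _ _) rfl
        _ = ∑ b, ∑ c, pdCost p P₂.ι P₃.ι b c * πe23 b c :=
            Finset.sum_congr rfl fun a _ => Finset.sum_congr rfl fun b _ => by ring
    · -- GW part
      have hrhs : ∑ q : T × T, w (Sum.inr (Sum.inl q)) * |g (Sum.inr (Sum.inl q))| ^ p
          = ∑ t1 : T, G t1.1 t1.2.1 t1.2.2 * ∑ t2 : T, G t2.1 t2.2.1 t2.2.2
              * |P₂.k t1.2.1 t2.2.1 - P₃.k t1.2.2 t2.2.2| ^ p := by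
        rw [Fintype.sum_prod_type]
        refine Finset.sum_congr rfl fun t1 _ => ?_
        rw [Finset.mul_sum]
        refine Finset.sum_congr rfl fun t2 _ => ?_
        have hgv : g (Sum.inr (Sum.inl (t1, t2)))
            = P₂.k t1.2.1 t2.2.1 - P₃.k t1.2.2 t2.2.2 := rfl
        rw [hgv]
        show G t1.1 t1.2.1 t1.2.2 * G t2.1 t2.2.1 t2.2.2 * _ = _
        ring
      rw [hrhs]
      have inner : ∀ t1 : T, ∑ t2 : T, G t2.1 t2.2.1 t2.2.2
            * |P₂.k t1.2.1 t2.2.1 - P₃.k t1.2.2 t2.2.2| ^ p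
          = ∑ x2, ∑ x2', πv23 x2 x2' * |P₂.k t1.2.1 x2 - P₃.k t1.2.2 x2'| ^ p := fun t1 =>
        gV3_marg23 hμ2 hc12 (F := fun b d => |P₂.k t1.2.1 b - P₃.k t1.2.2 d| ^ p)
      have outer : ∑ t1 : T, G t1.1 t1.2.1 t1.2.2 * (∑ x2, ∑ x2', πv23 x2 x2'
            * |P₂.k t1.2.1 x2 - P₃.k t1.2.2 x2'| ^ p)
          = ∑ x1, ∑ x1', πv23 x1 x1' * (∑ x2, ∑ x2', πv23 x2 x2'
            * |P₂.k x1 x2 - P₃.k x1' x2'| ^ p) :=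
        gV3_marg23 hμ2 hc12 (F := fun a c => ∑ x2, ∑ x2', πv23 x2 x2'
          * |P₂.k a x2 - P₃.k c x2'| ^ p)
      calc ∑ t1 : T, G t1.1 t1.2.1 t1.2.2 * ∑ t2 : T, G t2.1 t2.2.1 t2.2.2
              * |P₂.k t1.2.1 t2.2.1 - P₃.k t1.2.2 t2.2.2| ^ p
          = ∑ t1 : T, G t1.1 t1.2.1 t1.2.2 * (∑ x2, ∑ x2', πv23 x2 x2'
              * |P₂.k t1.2.1 x2 - P₃.k t1.2.2 x2'| ^ p) :=
            Finset.sum_congr rfl fun t1 _ => by rw [inner t1]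
        _ = ∑ x1, ∑ x1', πv23 x1 x1' * (∑ x2, ∑ x2', πv23 x2 x2'
              * |P₂.k x1 x2 - P₃.k x1' x2'| ^ p) := outer
        _ = ∑ x₁, ∑ x₁', ∑ x₂, ∑ x₂', |P₂.k x₁ x₂ - P₃.k x₁' x₂'| ^ p
              * πv23 x₁ x₁' * πv23 x₂ x₂' := by
            refine Finset.sum_congr rfl fun x1 _ => Finset.sum_congr rfl fun x1' _ => ?_
            rw [Finset.mul_sum]
            refine Finset.sum_congr rfl fun x2 _ => ?_
            rw [Finset.mul_sum]
            exact Finset.sum_congr rfl fun x2' _ => by ring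
        _ ≤ _ := le_refl _
    · -- coOT part
      have hrhs : ∑ q : T × U, w (Sum.inr (Sum.inr q)) * |g (Sum.inr (Sum.inr q))| ^ p
          = ∑ t : T, G t.1 t.2.1 t.2.2 * ∑ u : U, H u.1 u.2.1 u.2.2
              * |ωbar P₂.ω t.2.1 u.2.1 - ωbar P₃.ω t.2.2 u.2.2| ^ p := by
        rw [Fintype.sum_prod_type]
        refine Finset.sum_congr rfl fun t _ => ?_
        rw [Finset.mul_sum]
        refine Finset.sum_congr rfl fun u _ => ?_
        have hgv : g (Sum.inr (Sum.inr (t, u)))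
            = ωbar P₂.ω t.2.1 u.2.1 - ωbar P₃.ω t.2.2 u.2.2 := rfl
        rw [hgv]
        show G t.1 t.2.1 t.2.2 * H u.1 u.2.1 u.2.2 * _ = _
        ring
      rw [hrhs]
      have inner : ∀ t : T, ∑ u : U, H u.1 u.2.1 u.2.2
            * |ωbar P₂.ω t.2.1 u.2.1 - ωbar P₃.ω t.2.2 u.2.2| ^ p
          ≤ ∑ b, ∑ c, πe23 b c * |ωbar P₂.ω t.2.1 b - ωbar P₃.ω t.2.2 c| ^ p := by
        intro t
        refine gE3_marg23_le hν2 he12 he23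
          (fun b c => |ωbar P₂.ω t.2.1 b - ωbar P₃.ω t.2.2 c| ^ p)
          (fun a b => Real.rpow_nonneg (abs_nonneg _) _) ?_
        simp [ωbar, Real.zero_rpow hpne]
      calc ∑ t : T, G t.1 t.2.1 t.2.2 * ∑ u : U, H u.1 u.2.1 u.2.2
              * |ωbar P₂.ω t.2.1 u.2.1 - ωbar P₃.ω t.2.2 u.2.2| ^ p
          ≤ ∑ t : T, G t.1 t.2.1 t.2.2 * (∑ b, ∑ c, πe23 b c
              * |ωbar P₂.ω t.2.1 b - ωbar P₃.ω t.2.2 c| ^ p) :=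
            Finset.sum_le_sum fun t _ =>
              mul_le_mul_of_nonneg_left (inner t) (hGnn _ _ _)
        _ = ∑ x, ∑ x', πv23 x x' * (∑ b, ∑ c, πe23 b c
              * |ωbar P₂.ω x b - ωbar P₃.ω x' c| ^ p) :=
            gV3_marg23 hμ2 hc12 (F := fun x x' => ∑ b, ∑ c, πe23 b c
              * |ωbar P₂.ω x b - ωbar P₃.ω x' c| ^ p)
        _ = ∑ x, ∑ x', ∑ b : Option P₂.Y, ∑ c : Option P₃.Y,
              |ωbar P₂.ω x b - ωbar P₃.ω x' c| ^ p * πv23 x x' * πe23 b c := by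
            refine Finset.sum_congr rfl fun x _ => Finset.sum_congr rfl fun x' _ => ?_
            rw [Finset.mul_sum]
            refine Finset.sum_congr rfl fun b _ => ?_
            rw [Finset.mul_sum]
            exact Finset.sum_congr rfl fun c _ => by ring
  -- combine
  have hnn13 : 0 ≤ tpotObj p P₁ P₃ (fun x z => ∑ y, G x y z) (fun a c => ∑ b, H a b c) :=
    tpotObj_nonneg _ _ _ _ _
      (fun a b => Finset.sum_nonneg fun y _ => hGnn _ _ _)
      (fun a b => Finset.sum_nonneg fun y _ => hHnn _ _ _)
  have hfnn : 0 ≤ ∑ i, w i * |f i| ^ p :=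
    Finset.sum_nonneg fun i _ => mul_nonneg (hwnn i) (Real.rpow_nonneg (abs_nonneg _) _)
  have hgnn : 0 ≤ ∑ i, w i * |g i| ^ p :=
    Finset.sum_nonneg fun i _ => mul_nonneg (hwnn i) (Real.rpow_nonneg (abs_nonneg _) _)
  calc tpotObj p P₁ P₃ (fun x z => ∑ y, G x y z) (fun a c => ∑ b, H a b c) ^ (1/p)
      ≤ (∑ i, w i * |f i + g i| ^ p) ^ (1/p) :=
        Real.rpow_le_rpow hnn13 step1 (by positivity)
    _ ≤ (∑ i, w i * |f i| ^ p) ^ (1/p) + (∑ i, w i * |g i| ^ p) ^ (1/p) :=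
        weighted_minkowski hp w f g hwnn
    _ ≤ tpotObj p P₁ P₂ πv12 πe12 ^ (1/p) + tpotObj p P₂ P₃ πv23 πe23 ^ (1/p) :=
        add_le_add (Real.rpow_le_rpow hfnn step2 (by positivity))
          (Real.rpow_le_rpow hgnn step3 (by positivity))



lemma exists_plan (P P' : FinTopNet) (hP : P.Valid) (hP' : P'.Valid) :
    ∃ (πv : P.X → P'.X → ℝ) (πe : Option P.Y → Option P'.Y → ℝ),
      IsCoupling P.μ P'.μ πv ∧ IsAdmissible P.ν P'.ν πe := by
  refine ⟨fun a b => P.μ a * P'.μ b,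
    fun a c => match a, c with
      | some y, none => P.ν y
      | none, some y' => P'.ν y'
      | _, _ => 0, ⟨?_, ?_, ?_⟩, ⟨?_, ?_, ?_, rfl⟩⟩
  · intro a b; exact mul_nonneg (hP.2.1 a).le (hP'.2.1 b).le
  · intro a; rw [← Finset.mul_sum, hP'.2.2.1, mul_one]
  · intro b; rw [← Finset.sum_mul, hP.2.2.1, one_mul]
  · intro a c
    rcases a with _ | y <;> rcases c with _ | y' <;>
      first
        | exact le_refl 0
        | exact (hP.2.2.2 _).le
        | exact (hP'.2.2.2 _).le
  · intro y
    rw [Fintype.sum_option]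
    simp
  · intro y'
    rw [Fintype.sum_option]
    simp

/-- Triangle inequality for `d_{TpOT,p}` on finite measure topological networks. -/
theorem stmt_11 (p : ℝ) (hp : 1 ≤ p) (P₁ P₂ P₃ : FinTopNet)
    (h₁ : P₁.Valid) (h₂ : P₂.Valid) (h₃ : P₃.Valid) :
    dTpOT p P₁ P₃ ≤ dTpOT p P₁ P₂ + dTpOT p P₂ P₃ := by
  set S12 := {r | ∃ πv : P₁.X → P₂.X → ℝ, ∃ πe : Option P₁.Y → Option P₂.Y → ℝ,
    IsCoupling P₁.μ P₂.μ πv ∧ IsAdmissible P₁.ν P₂.ν πe ∧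
    r = (tpotObj p P₁ P₂ πv πe) ^ (1 / p)} with hS12
  set S23 := {r | ∃ πv : P₂.X → P₃.X → ℝ, ∃ πe : Option P₂.Y → Option P₃.Y → ℝ,
    IsCoupling P₂.μ P₃.μ πv ∧ IsAdmissible P₂.ν P₃.ν πe ∧
    r = (tpotObj p P₂ P₃ πv πe) ^ (1 / p)} with hS23
  set S13 := {r | ∃ πv : P₁.X → P₃.X → ℝ, ∃ πe : Option P₁.Y → Option P₃.Y → ℝ,
    IsCoupling P₁.μ P₃.μ πv ∧ IsAdmissible P₁.ν P₃.ν πe ∧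
    r = (tpotObj p P₁ P₃ πv πe) ^ (1 / p)} with hS13
  have hd12 : dTpOT p P₁ P₂ = sInf S12 := rfl
  have hd23 : dTpOT p P₂ P₃ = sInf S23 := rfl
  have hd13 : dTpOT p P₁ P₃ = sInf S13 := rfl
  have hne12 : S12.Nonempty := by
    obtain ⟨πv, πe, hc, he⟩ := exists_plan P₁ P₂ h₁ h₂
    exact ⟨_, πv, πe, hc, he, rfl⟩
  have hne23 : S23.Nonempty := by
    obtain ⟨πv, πe, hc, he⟩ := exists_plan P₂ P₃ h₂ h₃
    exact ⟨_, πv, πe, hc, he, rfl⟩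
  have hbdd13 : BddBelow S13 := by
    refine ⟨0, ?_⟩
    rintro r ⟨πv, πe, hc, he, rfl⟩
    exact Real.rpow_nonneg (tpotObj_nonneg _ _ _ _ _ hc.1 he.1) _
  have key : ∀ r12 ∈ S12, ∀ r23 ∈ S23, dTpOT p P₁ P₃ ≤ r12 + r23 := by
    rintro r12 ⟨πv12, πe12, hc12, he12, rfl⟩ r23 ⟨πv23, πe23, hc23, he23, rfl⟩
    have hmem : (tpotObj p P₁ P₃ (fun x z => ∑ y, gV3 P₂.μ πv12 πv23 x y z)
        (fun a c => ∑ b, gE3 P₂.ν πe12 πe23 a b c)) ^ (1 / p) ∈ S13 :=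
      ⟨_, _, gV_coupling h₂.2.1 hc12 hc23, gE_admissible h₂.2.2.2 he12 he23, rfl⟩
    rw [hd13]
    exact (csInf_le hbdd13 hmem).trans
      (key_ineq p hp P₁ P₂ P₃ h₂ _ _ _ _ hc12 he12 hc23 he23)
  have h1 : ∀ r23 ∈ S23, dTpOT p P₁ P₃ - r23 ≤ sInf S12 := fun r23 h23 =>
    le_csInf hne12 fun r12 h12 => by linarith [key r12 h12 r23 h23]
  have h2' : dTpOT p P₁ P₃ - sInf S12 ≤ sInf S23 :=
    le_csInf hne23 fun r23 h23 => by linarith [h1 r23 h23]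
  rw [hd12, hd23]
  linarith
end

section
/- If there is a weak isomorphism between two finite measure topological networks P and P' (i.e., measure-preserving maps φ : X → X' and ψ : Y → Y' with ι = ι' ∘ ψ, ω = ω' ∘ (φ × ψ), and k = k' ∘ (φ × φ)), then d_{TpOT,p}(P, P') = 0. -/
open Finset

open scoped Classical

/-- If there is a weak isomorphism between two finite measure topological networks
`P, P'` — measure-preserving maps `φ : X → X'`, `ψ : Y → Y'` with `ι = ι' ∘ ψ`,
`ω = ω' ∘ (φ × ψ)` and `k = k' ∘ (φ × φ)` — then `d_{TpOT,p}(P, P') = 0`. -/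
theorem stmt_12 (p : ℝ) (hp : 1 ≤ p) (P P' : FinTopNet)
    (hP : P.Valid) (hP' : P'.Valid)
    (φ : P.X → P'.X) (ψ : P.Y → P'.Y)
    (hφ : ∀ x' : P'.X, P'.μ x' = ∑ x, if φ x = x' then P.μ x else 0)
    (hψ : ∀ y' : P'.Y, P'.ν y' = ∑ y, if ψ y = y' then P.ν y else 0)
    (hι : ∀ y, P.ι y = P'.ι (ψ y))
    (hω : ∀ x y, P.ω x y = P'.ω (φ x) (ψ y))
    (hk : ∀ x₁ x₂, P.k x₁ x₂ = P'.k (φ x₁) (φ x₂)) :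
    dTpOT p P P' = 0 := by
  have hp0 : (0:ℝ) < p := lt_of_lt_of_le one_pos hp
  have hpne : p ≠ 0 := ne_of_gt hp0
  have hinvne : 1 / p ≠ 0 := by positivity
  -- the pushforward couplings
  set πv : P.X → P'.X → ℝ := fun x x' => if φ x = x' then P.μ x else 0 with hπv
  set πe : Option P.Y → Option P'.Y → ℝ := fun oy oy' =>
    match oy, oy' with
    | some y, some y' => if ψ y = y' then P.ν y else 0
    | _, _ => 0 with hπe
  have hcoup : IsCoupling P.μ P'.μ πv := by
    refine ⟨fun a b => ?_, fun a => ?_, fun b => (hφ b).symm⟩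
    · simp only [hπv]; split
      · exact le_of_lt (hP.2.1 a)
      · exact le_rfl
    · simp [hπv, Finset.sum_ite_eq]
  have hadm : IsAdmissible P.ν P'.ν πe := by
    refine ⟨fun a b => ?_, fun y => ?_, fun y' => ?_, rfl⟩
    · simp only [hπe]
      match a, b with
      | some y, some y' =>
        dsimp only; split
        · exact le_of_lt (hP.2.2.2 y)
        · exact le_rfl
      | some y, none => exact le_rfl
      | none, some y' => exact le_rfl
      | none, none => exact le_rfl
    · rw [Fintype.sum_option]
      simp [hπe, Finset.sum_ite_eq]
    · rw [Fintype.sum_option]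
      simp [hπe, (hψ y').symm]
  have hobj : tpotObj p P P' πv πe = 0 := by
    unfold tpotObj
    have h1 : (∑ y : Option P.Y, ∑ y' : Option P'.Y, pdCost p P.ι P'.ι y y' * πe y y') = 0 := by
      refine Finset.sum_eq_zero fun oy _ => Finset.sum_eq_zero fun oy' _ => ?_
      match oy, oy' with
      | some y, some y' =>
        simp only [hπe]
        by_cases h : ψ y = y'
        · subst h
          have : pdCost p P.ι P'.ι (some y) (some (ψ y)) = 0 := by
            simp [pdCost, lpp, hι y, Real.zero_rpow hpne]
          simp [this]
        · simp [h]
      | some y, none => simp [hπe]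
      | none, some y' => simp [hπe]
      | none, none => simp [hπe]
    have h2 : (∑ x₁, ∑ x₁', ∑ x₂, ∑ x₂',
        |P.k x₁ x₂ - P'.k x₁' x₂'| ^ p * πv x₁ x₁' * πv x₂ x₂') = 0 := by
      refine Finset.sum_eq_zero fun x₁ _ => Finset.sum_eq_zero fun x₁' _ =>
        Finset.sum_eq_zero fun x₂ _ => Finset.sum_eq_zero fun x₂' _ => ?_
      simp only [hπv]
      by_cases h1 : φ x₁ = x₁'
      · by_cases h2 : φ x₂ = x₂'
        · subst h1; subst h2
          rw [← hk, sub_self, abs_zero, Real.zero_rpow hpne, zero_mul, zero_mul]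
        · simp [h2]
      · simp [h1]
    have h3 : (∑ x, ∑ x', ∑ y : Option P.Y, ∑ y' : Option P'.Y,
        |ωbar P.ω x y - ωbar P'.ω x' y'| ^ p * πv x x' * πe y y') = 0 := by
      refine Finset.sum_eq_zero fun x _ => Finset.sum_eq_zero fun x' _ =>
        Finset.sum_eq_zero fun oy _ => Finset.sum_eq_zero fun oy' _ => ?_
      by_cases h1 : φ x = x'
      · subst h1
        match oy, oy' with
        | some y, some y' =>
          simp only [hπe]
          by_cases h2 : ψ y = y'
          · subst h2
            simp [ωbar, ← hω, sub_self, Real.zero_rpow hpne]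
          · simp [h2]
        | some y, none => simp [hπe]
        | none, some y' => simp [hπe]
        | none, none => simp [ωbar, Real.zero_rpow hpne]
      · simp [hπv, h1]
    rw [h1, h2, h3]; ring
  have hmem : (0:ℝ) ∈ {r | ∃ πv : P.X → P'.X → ℝ, ∃ πe : Option P.Y → Option P'.Y → ℝ,
      IsCoupling P.μ P'.μ πv ∧ IsAdmissible P.ν P'.ν πe ∧
      r = (tpotObj p P P' πv πe) ^ (1 / p)} := by
    exact ⟨πv, πe, hcoup, hadm, by rw [hobj, Real.zero_rpow hinvne]⟩
  have hlb : ∀ r ∈ {r | ∃ πv : P.X → P'.X → ℝ, ∃ πe : Option P.Y → Option P'.Y → ℝ,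
      IsCoupling P.μ P'.μ πv ∧ IsAdmissible P.ν P'.ν πe ∧
      r = (tpotObj p P P' πv πe) ^ (1 / p)}, (0:ℝ) ≤ r := by
    rintro r ⟨pv, pe, hc, ha, rfl⟩
    have hpd : ∀ (oy : Option P.Y) (oy' : Option P'.Y), 0 ≤ pdCost p P.ι P'.ι oy oy' := by
      intro oy oy'
      have hlpp : ∀ a b : ℝ × ℝ, 0 ≤ lpp p a b := fun a b =>
        add_nonneg (Real.rpow_nonneg (abs_nonneg _) _) (Real.rpow_nonneg (abs_nonneg _) _)
      match oy, oy' with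
      | some y, some y' => exact hlpp _ _
      | some y, none => exact hlpp _ _
      | none, some y' => exact hlpp _ _
      | none, none => exact le_rfl
    have hobjnn : 0 ≤ tpotObj p P P' pv pe := by
      unfold tpotObj
      refine add_nonneg (add_nonneg ?_ ?_) ?_
      · exact Finset.sum_nonneg fun _ _ => Finset.sum_nonneg fun _ _ =>
          mul_nonneg (hpd _ _) (ha.1 _ _)
      · refine Finset.sum_nonneg fun _ _ => Finset.sum_nonneg fun _ _ =>
          Finset.sum_nonneg fun _ _ => Finset.sum_nonneg fun _ _ => ?_
        exact mul_nonneg (mul_nonneg (Real.rpow_nonneg (abs_nonneg _) _) (hc.1 _ _)) (hc.1 _ _)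
      · refine Finset.sum_nonneg fun _ _ => Finset.sum_nonneg fun _ _ =>
          Finset.sum_nonneg fun _ _ => Finset.sum_nonneg fun _ _ => ?_
        exact mul_nonneg (mul_nonneg (Real.rpow_nonneg (abs_nonneg _) _) (hc.1 _ _)) (ha.1 _ _)
    exact Real.rpow_nonneg hobjnn _
  unfold dTpOT
  exact le_antisymm (csInf_le ⟨0, hlb⟩ hmem) (le_csInf ⟨0, hmem⟩ hlb)
end

section
/- For finite matrices: let X ∈ ℝ^{n×m}, X' ∈ ℝ^{n'×m'}, π ∈ ℝ^{n×n'}, ξ ∈ ℝ^{m×m'} with nonnegative entries, and define L(X, X')_{i j k l} = ½|X_{ik} − X'_{jl}|². Then ∑_{i,j,k,l} L(X, X')_{ijkl} π_{ij} ξ_{kl} = ½∑_{i,j} (∑_k X_{ik}² (∑_l ξ_{kl})) π_{ij}-type marginal terms minus ⟨X^T π X', ξ⟩; in particular, when π and ξ have fixed marginals, the coupling-dependent part of ⟨L(X, X') , π ⊗ ξ⟩ equals −⟨X^T π X', ξ⟩ plus a constant depending only on the marginals. -/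
open Finset

private lemma rot3 {α β γ : Type*} [Fintype α] [Fintype β] [Fintype γ]
    (f : α → β → γ → ℝ) :
    ∑ a, ∑ b, ∑ c, f a b c = ∑ c, ∑ a, ∑ b, f a b c := by
  rw [show (∑ a, ∑ b, ∑ c, f a b c) = ∑ a, ∑ c, ∑ b, f a b c from
    Finset.sum_congr rfl fun _ _ => Finset.sum_comm, Finset.sum_comm]

private lemma rot4 {α β γ δ : Type*} [Fintype α] [Fintype β] [Fintype γ] [Fintype δ]
    (f : α → β → γ → δ → ℝ) :
    ∑ a, ∑ b, ∑ c, ∑ d, f a b c d = ∑ d, ∑ a, ∑ b, ∑ c, f a b c d := by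
  rw [show (∑ a, ∑ b, ∑ c, ∑ d, f a b c d) = ∑ a, ∑ d, ∑ b, ∑ c, f a b c d from
    Finset.sum_congr rfl fun a _ => rot3 (f a), Finset.sum_comm]

/-- Tensor-matrix decomposition of the co-optimal transport distortion
(Peyré–Cuturi–Solomon): for couplings `π` with marginals `μ, μ'` and `ξ` with marginals
`ν, ν'`, the quadratic cost `⟨L(X, X'), π ⊗ ξ⟩` with `L(X,X')_{ijkl} = ½|X_{ik} − X'_{jl}|²`
equals a constant depending only on the marginals minus `⟨Xᵀ π X', ξ⟩`. -/
theorem stmt_16 {n n' m m' : ℕ}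
    (X : Fin n → Fin m → ℝ) (X' : Fin n' → Fin m' → ℝ)
    (π : Fin n → Fin n' → ℝ) (ξ : Fin m → Fin m' → ℝ)
    (μ : Fin n → ℝ) (μ' : Fin n' → ℝ) (ν : Fin m → ℝ) (ν' : Fin m' → ℝ)
    (hπ : ∀ i j, 0 ≤ π i j) (hξ : ∀ k l, 0 ≤ ξ k l)
    (hπrow : ∀ i, ∑ j, π i j = μ i) (hπcol : ∀ j, ∑ i, π i j = μ' j)
    (hξrow : ∀ k, ∑ l, ξ k l = ν k) (hξcol : ∀ l, ∑ k, ξ k l = ν' l) :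
    ∑ i, ∑ j, ∑ k, ∑ l, (1 / 2) * |X i k - X' j l| ^ 2 * π i j * ξ k l =
      (1 / 2) * ((∑ i, ∑ k, (X i k) ^ 2 * μ i * ν k) +
          (∑ j, ∑ l, (X' j l) ^ 2 * μ' j * ν' l)) -
        ∑ k, ∑ l, (∑ i, ∑ j, X i k * π i j * X' j l) * ξ k l := by
  simp only [← hπrow, ← hπcol, ← hξrow, ← hξcol, sq_abs]
  simp only [Finset.mul_sum, Finset.sum_mul]
  rw [show (∑ i, ∑ k : Fin m, ∑ l : Fin m', ∑ j : Fin n', X i k ^ 2 * π i j * ξ k l)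
      = ∑ i, ∑ j : Fin n', ∑ k : Fin m, ∑ l : Fin m', X i k ^ 2 * π i j * ξ k l from
      Finset.sum_congr rfl fun i _ => rot3 _]
  rw [show (∑ j, ∑ l : Fin m', ∑ k : Fin m, ∑ i : Fin n, X' j l ^ 2 * π i j * ξ k l)
      = ∑ i : Fin n, ∑ j, ∑ l : Fin m', ∑ k : Fin m, X' j l ^ 2 * π i j * ξ k l from by
      rw [rot4]]
  rw [show (∑ i : Fin n, ∑ j, ∑ l : Fin m', ∑ k : Fin m, X' j l ^ 2 * π i j * ξ k l)
      = ∑ i : Fin n, ∑ j, ∑ k : Fin m, ∑ l : Fin m', X' j l ^ 2 * π i j * ξ k l from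
      Finset.sum_congr rfl fun i _ => Finset.sum_congr rfl fun j _ => Finset.sum_comm]
  rw [show (∑ k, ∑ l : Fin m', ∑ i : Fin n, ∑ j : Fin n', X i k * π i j * X' j l * ξ k l)
      = ∑ j : Fin n', ∑ k, ∑ l : Fin m', ∑ i : Fin n, X i k * π i j * X' j l * ξ k l from by
      rw [rot4]]
  rw [show (∑ j : Fin n', ∑ k, ∑ l : Fin m', ∑ i : Fin n, X i k * π i j * X' j l * ξ k l)
      = ∑ i : Fin n, ∑ j : Fin n', ∑ k, ∑ l : Fin m', X i k * π i j * X' j l * ξ k l from by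
      rw [rot4]]
  simp only [Finset.mul_sum, ← Finset.sum_add_distrib, ← Finset.sum_sub_distrib]
  exact Finset.sum_congr rfl fun _ _ => Finset.sum_congr rfl fun _ _ =>
    Finset.sum_congr rfl fun _ _ => Finset.sum_congr rfl fun _ _ => by ring
end

section
/- Weak isomorphism of measure topological networks is an equivalence relation: the relation P ∼_w P', defined by the existence of a third network P̄ with weak isomorphisms from P̄ to both P and P', is reflexive, symmetric, and transitive on the class of finite measure topological networks. -/
open Finset

open scoped Classical

/-- A weak isomorphism from `Q` to `P`: measure-preserving maps intertwining the gauge,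
persistence and incidence data. -/
def IsWeakIso (Q P : FinTopNet) (φ : Q.X → P.X) (ψ : Q.Y → P.Y) : Prop :=
  (∀ x : P.X, P.μ x = ∑ a ∈ Finset.univ.filter (fun a => φ a = x), Q.μ a) ∧
  (∀ y : P.Y, P.ν y = ∑ b ∈ Finset.univ.filter (fun b => ψ b = y), Q.ν b) ∧
  (∀ y, Q.ι y = P.ι (ψ y)) ∧
  (∀ x y, Q.ω x y = P.ω (φ x) (ψ y)) ∧
  (∀ x₁ x₂, Q.k x₁ x₂ = P.k (φ x₁) (φ x₂))

/-- `P ∼_w P'`: there is a third network with weak isomorphisms onto both `P` and `P'`. -/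
def WeaklyIsomorphic (P P' : {P : FinTopNet // P.Valid}) : Prop :=
  ∃ Q : FinTopNet, Q.Valid ∧
    (∃ φ ψ, IsWeakIso Q P.1 φ ψ) ∧ (∃ φ' ψ', IsWeakIso Q P'.1 φ' ψ')

/-- Marginal of the fiber-product measure along the first coordinate. -/
lemma fiber_marg_left {A B C D : Type} [Fintype A] [Fintype B] (e : A → C) (t : B → C)
    (μA : A → ℝ) (μB : B → ℝ) (m : C → ℝ)
    (hB : ∀ c, m c = ∑ b ∈ Finset.univ.filter (fun b => t b = c), μB b)
    (hm : ∀ a, m (e a) ≠ 0) (g : A → D) (x : D) :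
    ∑ s ∈ (Finset.univ : Finset {p : A × B // e p.1 = t p.2}).filter (fun s => g s.1.1 = x),
      μA s.1.1 * μB s.1.2 / m (e s.1.1)
    = ∑ a ∈ Finset.univ.filter (fun a => g a = x), μA a := by
  rw [Finset.sum_filter, Finset.sum_filter]
  have hsub : ∑ s : {p : A × B // e p.1 = t p.2},
      (if g s.1.1 = x then μA s.1.1 * μB s.1.2 / m (e s.1.1) else 0)
      = ∑ p ∈ Finset.univ.filter (fun p : A × B => e p.1 = t p.2),
        (if g p.1 = x then μA p.1 * μB p.2 / m (e p.1) else 0) :=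
    by
      have hmem : ∀ p : A × B,
          p ∈ Finset.univ.filter (fun p : A × B => e p.1 = t p.2) ↔ e p.1 = t p.2 := by
        intro p; simp
      exact (Finset.sum_subtype _ hmem
        (fun p => if g p.1 = x then μA p.1 * μB p.2 / m (e p.1) else 0)).symm
  rw [hsub, Finset.sum_filter, Fintype.sum_prod_type]
  refine Finset.sum_congr rfl fun a _ => ?_
  by_cases hg : g a = x
  · simp only [hg, if_true]
    calc ∑ b, (if e a = t b then μA a * μB b / m (e a) else 0)
        = ∑ b, (if t b = e a then μB b else 0) * (μA a / m (e a)) := by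
          refine Finset.sum_congr rfl fun b _ => ?_
          by_cases h : t b = e a
          · rw [if_pos h.symm, if_pos h]; ring
          · have h' : ¬ (e a = t b) := fun hh => h hh.symm
            simp [h, h']
      _ = (∑ b, if t b = e a then μB b else 0) * (μA a / m (e a)) :=
          (Finset.sum_mul _ _ _).symm
      _ = m (e a) * (μA a / m (e a)) := by rw [hB (e a), Finset.sum_filter]
      _ = μA a := by rw [mul_comm, div_mul_cancel₀ _ (hm a)]
  · simp [hg]

/-- Marginal of the fiber-product measure along the second coordinate. -/
lemma fiber_marg_right {A B C D : Type} [Fintype A] [Fintype B] (e : A → C) (t : B → C)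
    (μA : A → ℝ) (μB : B → ℝ) (m : C → ℝ)
    (hA : ∀ c, m c = ∑ a ∈ Finset.univ.filter (fun a => e a = c), μA a)
    (hm : ∀ b, m (t b) ≠ 0) (g : B → D) (x : D) :
    ∑ s ∈ (Finset.univ : Finset {p : A × B // e p.1 = t p.2}).filter (fun s => g s.1.2 = x),
      μA s.1.1 * μB s.1.2 / m (e s.1.1)
    = ∑ b ∈ Finset.univ.filter (fun b => g b = x), μB b := by
  rw [Finset.sum_filter, Finset.sum_filter]
  have hsub : ∑ s : {p : A × B // e p.1 = t p.2},
      (if g s.1.2 = x then μA s.1.1 * μB s.1.2 / m (e s.1.1) else 0)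
      = ∑ p ∈ Finset.univ.filter (fun p : A × B => e p.1 = t p.2),
        (if g p.2 = x then μA p.1 * μB p.2 / m (e p.1) else 0) :=
    by
      have hmem : ∀ p : A × B,
          p ∈ Finset.univ.filter (fun p : A × B => e p.1 = t p.2) ↔ e p.1 = t p.2 := by
        intro p; simp
      exact (Finset.sum_subtype _ hmem
        (fun p => if g p.2 = x then μA p.1 * μB p.2 / m (e p.1) else 0)).symm

  rw [hsub, Finset.sum_filter, Fintype.sum_prod_type, Finset.sum_comm]
  refine Finset.sum_congr rfl fun b _ => ?_
  by_cases hg : g b = x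
  · simp only [hg, if_true]
    calc ∑ a, (if e a = t b then μA a * μB b / m (e a) else 0)
        = ∑ a, (if e a = t b then μA a else 0) * (μB b / m (t b)) := by
          refine Finset.sum_congr rfl fun a _ => ?_
          by_cases h : e a = t b
          · simp only [h, if_true]; ring
          · simp [h]
      _ = (∑ a, if e a = t b then μA a else 0) * (μB b / m (t b)) :=
          (Finset.sum_mul _ _ _).symm
      _ = m (t b) * (μB b / m (t b)) := by rw [hA (t b), Finset.sum_filter]
      _ = μB b := by rw [mul_comm, div_mul_cancel₀ _ (hm b)]
  · simp [hg]

/-- Weak isomorphism is an equivalence relation on (valid) finite measure topological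
networks. -/
theorem stmt_19 : Equivalence WeaklyIsomorphic := by
  constructor
  · -- reflexivity
    intro P
    refine ⟨P.1, P.2, ⟨id, id, ?_, ?_, fun _ => rfl, fun _ _ => rfl, fun _ _ => rfl⟩,
      ⟨id, id, ?_, ?_, fun _ => rfl, fun _ _ => rfl, fun _ _ => rfl⟩⟩ <;>
    · intro x; simp [Finset.sum_filter]
  · -- symmetry
    rintro P P' ⟨Q, hQ, h1, h2⟩
    exact ⟨Q, hQ, h2, h1⟩
  · -- transitivity
    rintro P P' P'' ⟨Q, hQ, ⟨φ₁, ψ₁, h1μ, h1ν, h1ι, h1ω, h1k⟩, ⟨φ₂, ψ₂, h2μ, h2ν, h2ι, h2ω, h2k⟩⟩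
      ⟨R, hR, ⟨θ₂, σ₂, h3μ, h3ν, h3ι, h3ω, h3k⟩, ⟨θ₃, σ₃, h4μ, h4ν, h4ι, h4ω, h4k⟩⟩
    obtain ⟨hQk, hQμ, hQs, hQν⟩ := hQ
    obtain ⟨hRk, hRμ, hRs, hRν⟩ := hR
    obtain ⟨hP'k, hP'μ, hP's, hP'ν⟩ := P'.2
    obtain ⟨hPk, hPμ, hPs, hPν⟩ := P.2
    set S : FinTopNet :=
      { X := {p : Q.X × R.X // φ₂ p.1 = θ₂ p.2}
        Y := {q : Q.Y × R.Y // ψ₂ q.1 = σ₂ q.2}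
        k := fun s t => Q.k s.1.1 t.1.1
        μ := fun s => Q.μ s.1.1 * R.μ s.1.2 / P'.1.μ (φ₂ s.1.1)
        ι := fun q => Q.ι q.1.1
        ν := fun q => Q.ν q.1.1 * R.ν q.1.2 / P'.1.ν (ψ₂ q.1.1)
        ω := fun s q => Q.ω s.1.1 q.1.1 } with hS
    have hmμ : ∀ a : Q.X, P'.1.μ (φ₂ a) ≠ 0 := fun a => (hP'μ _).ne'
    have hmν : ∀ y : Q.Y, P'.1.ν (ψ₂ y) ≠ 0 := fun y => (hP'ν _).ne'
    have hmμ' : ∀ b : R.X, P'.1.μ (θ₂ b) ≠ 0 := fun b => (hP'μ _).ne'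
    have hmν' : ∀ z : R.Y, P'.1.ν (σ₂ z) ≠ 0 := fun z => (hP'ν _).ne'
    refine ⟨S, ⟨fun s t => hQk _ _, fun s => div_pos (mul_pos (hQμ _) (hRμ _)) (hP'μ _),
      ?_, fun q => div_pos (mul_pos (hQν _) (hRν _)) (hP'ν _)⟩,
      ⟨fun s => φ₁ s.1.1, fun q => ψ₁ q.1.1, ?_, ?_, fun q => h1ι _, fun s q => h1ω _ _,
        fun s t => h1k _ _⟩,
      ⟨fun s => θ₃ s.1.2, fun q => σ₃ q.1.2, ?_, ?_, ?_, ?_, ?_⟩⟩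
    · -- total mass 1
      rw [← Finset.sum_fiberwise Finset.univ (fun s : S.X => φ₁ s.1.1) S.μ, ← hPs]
      refine Finset.sum_congr rfl fun x _ => ?_
      rw [fiber_marg_left φ₂ θ₂ Q.μ R.μ P'.1.μ h3μ hmμ φ₁ x, ← h1μ]
    · -- μ marginal onto P
      intro x
      rw [fiber_marg_left φ₂ θ₂ Q.μ R.μ P'.1.μ h3μ hmμ φ₁ x, ← h1μ]
    · -- ν marginal onto P
      intro y
      rw [fiber_marg_left ψ₂ σ₂ Q.ν R.ν P'.1.ν h3ν hmν ψ₁ y, ← h1ν]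
    · -- μ marginal onto P''
      intro x
      rw [fiber_marg_right φ₂ θ₂ Q.μ R.μ P'.1.μ h2μ hmμ' θ₃ x, ← h4μ]
    · -- ν marginal onto P''
      intro y
      rw [fiber_marg_right ψ₂ σ₂ Q.ν R.ν P'.1.ν h2ν hmν' σ₃ y, ← h4ν]
    · -- ι
      intro q
      show Q.ι q.1.1 = P''.1.ι (σ₃ q.1.2)
      rw [h2ι, q.2, ← h3ι, h4ι]
    · -- ω
      intro s q
      show Q.ω s.1.1 q.1.1 = P''.1.ω (θ₃ s.1.2) (σ₃ q.1.2)
      rw [h2ω, s.2, q.2, ← h3ω, h4ω]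
    · -- k
      intro s t
      show Q.k s.1.1 t.1.1 = P''.1.k (θ₃ s.1.2) (θ₃ t.1.2)
      rw [h2k, s.2, t.2, ← h3k, h4k]
end
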